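/- arXiv:1904.09231 — 7 statements merged into one kernel-verified Lean document; each statement's English description precedes it below -/
import Mathlib

section
/- Let G be a strict, transitively closed episode, let s = s_1⋯s_L be a sequence covering G, and let k be an index such that s[k+1, L] also covers G. Set m_1 = g(G; s) and m_2 = g(G; s[k+1, L]), both taken as maps into indices of s. Then m_2(v) ≥ m_1(v) for every node v of G. -/
open scoped Classical

/-- An episode: a finite directed acyclic graph with nodes drawn from `ℕ`,
labelled by symbols of an alphabet `α`. -/
structure Episode (α : Type*) where
  nodes : Finset ℕ
  edge : ℕ → ℕ → Prop
  lab : ℕ → α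
  edge_mem : ∀ ⦃x y : ℕ⦄, edge x y → x ∈ nodes ∧ y ∈ nodes

namespace Episode

variable {α : Type*}

/-- Transitively closed: whenever there is a directed path from `u` to `v`,
`(u,v)` is an edge. -/
def TransClosed (G : Episode α) : Prop :=
  ∀ ⦃u v : ℕ⦄, Relation.TransGen G.edge u v → G.edge u v

/-- Acyclic: no directed cycles. -/
def Acyclic (G : Episode α) : Prop := ∀ v : ℕ, ¬ Relation.TransGen G.edge v v

/-- Strict: any two distinct nodes sharing the same label are joined by a
directed path. -/
def Strict (G : Episode α) : Prop :=
  ∀ u ∈ G.nodes, ∀ v ∈ G.nodes, u ≠ v → G.lab u = G.lab v →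
    Relation.TransGen G.edge u v ∨ Relation.TransGen G.edge v u

/-- The class `𝒮` of strict, transitively closed (acyclic) episodes. -/
def inS (G : Episode α) : Prop := G.Acyclic ∧ G.TransClosed ∧ G.Strict

/-- A sequence `s` covers an episode `G`: there is an injective map from the
nodes of `G` to indices of `s` matching labels and respecting edges. -/
def Covers (s : List α) (G : Episode α) : Prop :=
  ∃ f : {v // v ∈ G.nodes} → Fin s.length,
    Function.Injective f ∧ (∀ v, s.get (f v) = G.lab v.1) ∧
      ∀ u v, G.edge u.1 v.1 → f u < f v

/-- `f` witnesses that `s` is an instance of `G`: a bijective valid mapping. -/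
def IsInstanceMap (s : List α) (G : Episode α)
    (f : {v // v ∈ G.nodes} → Fin s.length) : Prop :=
  Function.Bijective f ∧ (∀ v, s.get (f v) = G.lab v.1) ∧
    ∀ u v, G.edge u.1 v.1 → f u < f v

/-- The subgraph of `H` induced on a set `U` of nodes. -/
def restrict (H : Episode α) (U : Finset ℕ) : Episode α where
  nodes := U
  edge := fun x y => x ∈ U ∧ y ∈ U ∧ H.edge x y
  lab := H.lab
  edge_mem := by rintro x y ⟨h1, h2, -⟩; exact ⟨h1, h2⟩

/-- `G ⪯ H`: `G` is a subepisode of `H`.  There is a subgraph of `H` with as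
many nodes as `G` such that every sequence covering that subgraph covers `G`. -/
def Subep (G H : Episode α) : Prop :=
  ∃ U : Finset ℕ, U ⊆ H.nodes ∧ U.card = G.nodes.card ∧
    ∀ s : List α, Covers s (H.restrict U) → Covers s G

/-- `G ≺ H`: proper subepisode. -/
def ProperSubep (G H : Episode α) : Prop := Subep G H ∧ ¬ Subep H G

/-- `G ∼ H`: every sequence covers `G` iff it covers `H`. -/
def Equivalent (G H : Episode α) : Prop := ∀ s : List α, Covers s G ↔ Covers s H

/-- The nodes of `G` are `0, …, card − 1` listed in the canonical order:
labels increase, and nodes with equal labels are ordered by the edges. -/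
def CanonicallyIndexed [LinearOrder α] (G : Episode α) : Prop :=
  G.nodes = Finset.range G.nodes.card ∧
    ∀ u ∈ G.nodes, ∀ v ∈ G.nodes, u < v →
      G.lab u < G.lab v ∨ (G.lab u = G.lab v ∧ G.edge u v)

/-- An occurrence (instance) of `G` inside `s` whose span is smaller than the
window size `ρ`: an injective valid mapping with `max f − min f < ρ`. -/
def IsOcc (s : List α) (ρ : ℕ) (G : Episode α)
    (f : {v // v ∈ G.nodes} → Fin s.length) : Prop :=
  Function.Injective f ∧ (∀ v, s.get (f v) = G.lab v.1) ∧
    (∀ u v, G.edge u.1 v.1 → f u < f v) ∧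
    ∀ u v, (f u : ℕ) < (f v : ℕ) + ρ

/-- `G` occurs in `s` within some window of length at most `ρ`. -/
def Occurs (s : List α) (ρ : ℕ) (G : Episode α) : Prop := ∃ f, IsOcc s ρ G f

/-- The symbol `x` occurs in `s` inside the interval `[min f, max f]` of an
occurrence `f`. -/
def SymInWindow (s : List α) {G : Episode α}
    (f : {v // v ∈ G.nodes} → Fin s.length) (x : α) : Prop :=
  ∃ i : Fin s.length, s.get i = x ∧ (∃ u, f u ≤ i) ∧ ∃ v, i ≤ f v

/-- The node closure `cl_N`: augment `G` with one new isolated node labelled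
`x` for each symbol `x` of `s`, not labelling a node of `G`, that occurs inside
the interval of every occurrence of `G` (with span `< ρ`). -/
noncomputable def clN [LinearOrder α] (s : List α) (ρ : ℕ) (G : Episode α) :
    Episode α :=
  let newLabs : List α := (s.toFinset.filter
      (fun x => (∀ f, IsOcc s ρ G f → SymInWindow s f x) ∧
        ∀ v ∈ G.nodes, G.lab v ≠ x)).sort (· ≤ ·)
  let base : ℕ := G.nodes.sup id + 1
  { nodes := G.nodes ∪ (Finset.range newLabs.length).image (fun i => base + i)
    edge := G.edge
    lab := fun v =>
      if h : base ≤ v ∧ v - base < newLabs.length ∧ v ∉ G.nodes then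
        newLabs.get ⟨v - base, h.2.1⟩
      else G.lab v
    edge_mem := by
      intro x y h
      exact ⟨Finset.mem_union_left _ (G.edge_mem h).1,
        Finset.mem_union_left _ (G.edge_mem h).2⟩ }

/-- The edge closure `cl_E`: the maximal episode covered by all instances of
`G` in `s` with span `< ρ`; it has an edge `(x,y)` whenever the (unique) valid
mapping of every such instance places `x` before `y`. -/
def clE (s : List α) (ρ : ℕ) (G : Episode α) : Episode α where
  nodes := G.nodes
  edge := fun x y => ∃ (hx : x ∈ G.nodes) (hy : y ∈ G.nodes),
    ∀ f, IsOcc s ρ G f → f ⟨x, hx⟩ < f ⟨y, hy⟩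
  lab := G.lab
  edge_mem := by rintro x y ⟨hx, hy, -⟩; exact ⟨hx, hy⟩

/-- The `i`-closure `icl(G) = cl_E(cl_N(G))`. -/
noncomputable def icl [LinearOrder α] (s : List α) (ρ : ℕ) (G : Episode α) :
    Episode α :=
  clE s ρ (clN s ρ G)

/-- The window `s[a, b]` (0-based, inclusive endpoints). -/
def window (s : List α) (a b : ℕ) : List α := (s.take (b + 1)).drop a

/-- `s[a,b]` is a minimal window of `G` in `s`: it covers `G` and no proper
subwindow of it covers `G`. -/
def IsMinimalWindow (s : List α) (G : Episode α) (a b : ℕ) : Prop :=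
  a ≤ b ∧ b < s.length ∧ Covers (window s a b) G ∧
    ∀ a' b', a ≤ a' → b' ≤ b → a' ≤ b' → (a', b') ≠ (a, b) →
      ¬ Covers (window s a' b') G

/-- Fixed-window frequency: the number of windows of length `ρ` (indexed by
their right endpoints, windows may stick out of the sequence) covering `G`. -/
noncomputable def freqF (s : List α) (ρ : ℕ) (G : Episode α) : ℕ :=
  ((Finset.range (s.length + ρ - 1)).filter
    (fun b => Covers (window s (b + 1 - ρ) b) G)).card

/-- Disjoint-window frequency: the maximal number of pairwise disjoint
intervals of length at most `ρ` whose windows cover `G`. -/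
noncomputable def freqD (s : List α) (ρ : ℕ) (G : Episode α) : ℕ :=
  sSup {n : ℕ | ∃ I : Fin n → ℕ × ℕ,
    (∀ i, (I i).1 ≤ (I i).2 ∧ (I i).2 < (I i).1 + ρ ∧ (I i).2 < s.length ∧
      Covers (window s (I i).1 (I i).2) G) ∧
    ∀ i j, i ≠ j → (I i).2 < (I j).1 ∨ (I j).2 < (I i).1}

/-- `G` is f-closed w.r.t. the fixed-window frequency. -/
noncomputable def FClosedF (s : List α) (ρ : ℕ) (G : Episode α) : Prop :=
  ¬ ∃ H : Episode α, inS H ∧ ProperSubep G H ∧ freqF s ρ H = freqF s ρ G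

/-- `G` is f-closed w.r.t. the disjoint-window frequency. -/
noncomputable def FClosedD (s : List α) (ρ : ℕ) (G : Episode α) : Prop :=
  ¬ ∃ H : Episode α, inS H ∧ ProperSubep G H ∧ freqD s ρ H = freqD s ρ G

/-- `G − e`: remove an edge. -/
def eraseEdge (G : Episode α) (e : ℕ × ℕ) : Episode α where
  nodes := G.nodes
  edge := fun x y => G.edge x y ∧ (x, y) ≠ e
  lab := G.lab
  edge_mem := by rintro x y ⟨h, -⟩; exact G.edge_mem h

/-- `G − v`: remove a node together with all incident edges. -/
def eraseNode (G : Episode α) (w : ℕ) : Episode α where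
  nodes := G.nodes.erase w
  edge := fun x y => G.edge x y ∧ x ≠ w ∧ y ≠ w
  lab := G.lab
  edge_mem := by
    rintro x y ⟨h, hx, hy⟩
    exact ⟨Finset.mem_erase.mpr ⟨hx, (G.edge_mem h).1⟩,
      Finset.mem_erase.mpr ⟨hy, (G.edge_mem h).2⟩⟩

/-- `G + e`: add an edge. -/
def addEdge (G : Episode α) (e : ℕ × ℕ) : Episode α where
  nodes := G.nodes ∪ {e.1, e.2}
  edge := fun x y => G.edge x y ∨ (x, y) = e
  lab := G.lab
  edge_mem := by
    rintro x y (h | h)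
    · exact ⟨Finset.mem_union_left _ (G.edge_mem h).1,
        Finset.mem_union_left _ (G.edge_mem h).2⟩
    · cases h
      exact ⟨Finset.mem_union_right _ (by simp), Finset.mem_union_right _ (by simp)⟩

/-- A skeleton edge: an edge `(v,w)` such that there is no two-step path
`v → u → w`. -/
def IsSkeletonEdge (G : Episode α) (e : ℕ × ℕ) : Prop :=
  G.edge e.1 e.2 ∧ ¬ ∃ u, G.edge e.1 u ∧ G.edge u e.2

/-- A proper skeleton edge: a skeleton edge whose endpoints carry different
labels. -/
def IsProperSkeletonEdge (G : Episode α) (e : ℕ × ℕ) : Prop :=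
  IsSkeletonEdge G e ∧ G.lab e.1 ≠ G.lab e.2

/-- The set of edges of `G`, as a set of pairs. -/
def edgeSet (G : Episode α) : Set (ℕ × ℕ) := {p | G.edge p.1 p.2}

/-- Lexicographic order on edges (using the canonical order of the nodes). -/
def edgeLT (e f : ℕ × ℕ) : Prop := e.1 < f.1 ∨ (e.1 = f.1 ∧ e.2 < f.2)

/-- `e` is the last (lexicographically largest) proper skeleton edge of `G`. -/
def IsLastEdge (G : Episode α) (e : ℕ × ℕ) : Prop :=
  IsProperSkeletonEdge G e ∧
    ∀ f, IsProperSkeletonEdge G f → f = e ∨ edgeLT f e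

/-- A solitary node: a node with no incident edges. -/
def Solitary (G : Episode α) (v : ℕ) : Prop :=
  v ∈ G.nodes ∧ ∀ u, ¬ G.edge u v ∧ ¬ G.edge v u

/-- A source node: a node with no incoming edges. -/
def IsSource (G : Episode α) (v : ℕ) : Prop := v ∈ G.nodes ∧ ∀ u, ¬ G.edge u v

/-- A proper skeleton edge `e` of `G` is derivable if `G ⪯ icl(G − e)`. -/
noncomputable def DerivableEdge [LinearOrder α] (s : List α) (ρ : ℕ)
    (G : Episode α) (e : ℕ × ℕ) : Prop :=
  IsProperSkeletonEdge G e ∧ Subep G (icl s ρ (G.eraseEdge e))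

/-- A solitary node `v` of `G` is derivable if `G ⪯ icl(G − v)`. -/
noncomputable def DerivableNode [LinearOrder α] (s : List α) (ρ : ℕ)
    (G : Episode α) (v : ℕ) : Prop :=
  Solitary G v ∧ Subep G (icl s ρ (G.eraseNode v))

/-- `GreedyFrom s t G f`: `f` is the greedy mapping of `G` in the suffix of `s`
starting at (0-based) position `t`, recording absolute indices of `s`:
repeatedly map the source node of `G` whose label has the earliest remaining
occurrence to that position, and recurse on the episode with that node
removed and the part of the sequence after that position. -/
inductive GreedyFrom (s : List α) : ℕ → Episode α → (ℕ → ℕ) → Prop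
  | empty (t : ℕ) (G : Episode α) (f : ℕ → ℕ) (hG : G.nodes = ∅) :
      GreedyFrom s t G f
  | step (t : ℕ) (G : Episode α) (f : ℕ → ℕ) (v k : ℕ)
      (hv : G.IsSource v) (ht : t ≤ k) (hk : k < s.length)
      (hlab : s.get ⟨k, hk⟩ = G.lab v)
      (hmin : ∀ j (hj : j < s.length), t ≤ j → j < k →
        ¬ ∃ w, G.IsSource w ∧ s.get ⟨j, hj⟩ = G.lab w)
      (hfv : f v = k)
      (hrec : GreedyFrom s (k + 1) (G.eraseNode v) f) :
      GreedyFrom s t G f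

/-- One step of removing a derivable proper skeleton edge or a derivable
solitary node. -/
noncomputable def RemStep [LinearOrder α] (s : List α) (ρ : ℕ) :
    Episode α → Episode α → Prop := fun G G' =>
  (∃ e, DerivableEdge s ρ G e ∧ G' = G.eraseEdge e) ∨
  (∃ v, DerivableNode s ρ G v ∧ G' = G.eraseNode v)

lemma transGen_edge_eraseNode {G : Episode α} {w u v : ℕ}
    (h : Relation.TransGen (G.eraseNode w).edge u v) :
    Relation.TransGen G.edge u v ∧ u ≠ w ∧ v ≠ w := by
  induction h with
  | single h => exact ⟨Relation.TransGen.single h.1, h.2.1, h.2.2⟩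
  | tail _ h ih => exact ⟨ih.1.tail h.1, ih.2.1, h.2.2⟩

lemma inS_eraseNode {G : Episode α} (hG : inS G) (w : ℕ) : inS (G.eraseNode w) := by
  obtain ⟨hac, htc, hst⟩ := hG
  refine ⟨?_, ?_, ?_⟩
  · intro v hv
    exact hac v (transGen_edge_eraseNode hv).1
  · intro u v h
    obtain ⟨h1, h2, h3⟩ := transGen_edge_eraseNode h
    exact ⟨htc h1, h2, h3⟩
  · intro u hu v hv hne hlab
    have hu' := Finset.mem_erase.mp hu
    have hv' := Finset.mem_erase.mp hv
    rcases hst u hu'.2 v hv'.2 hne hlab with h | h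
    · exact Or.inl (Relation.TransGen.single ⟨htc h, hu'.1, hv'.1⟩)
    · exact Or.inr (Relation.TransGen.single ⟨htc h, hv'.1, hu'.1⟩)

/-- The greedy mapping is itself a valid mapping: labels match, edges are
respected, and all values are `≥ t`. -/
lemma greedy_valid {s : List α} {t : ℕ} {G : Episode α} {m : ℕ → ℕ}
    (h : GreedyFrom s t G m) :
    (∀ v ∈ G.nodes, ∃ hh : m v < s.length, s.get ⟨m v, hh⟩ = G.lab v) ∧
    (∀ u v, G.edge u v → m u < m v) ∧ (∀ v ∈ G.nodes, t ≤ m v) := by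
  induction h with
  | empty t G f hG =>
    refine ⟨by simp [hG], fun u v h => absurd (G.edge_mem h).1 (by simp [hG]),
      by simp [hG]⟩
  | step t G f v k hv ht hk hlab hmin hfv hrec ih =>
    obtain ⟨ih1, ih2, ih3⟩ := ih
    have hvne : ∀ u v', G.edge u v' → v' ≠ v := fun u v' he hvv =>
      hv.2 u (hvv ▸ he)
    refine ⟨?_, ?_, ?_⟩
    · intro v' hv'
      by_cases hc : v' = v
      · subst hc
        simp only [hfv]
        exact ⟨hk, hlab⟩
      · exact ih1 v' (Finset.mem_erase.mpr ⟨hc, hv'⟩)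
    · intro u v' he
      have hne := hvne u v' he
      by_cases hc : u = v
      · subst hc
        have hmem : v' ∈ (G.eraseNode u).nodes :=
          Finset.mem_erase.mpr ⟨hne, (G.edge_mem he).2⟩
        have := ih3 v' hmem
        omega
      · exact ih2 u v' ⟨he, hc, hne⟩
    · intro v' hv'
      by_cases hc : v' = v
      · subst hc; omega
      · have := ih3 v' (Finset.mem_erase.mpr ⟨hc, hv'⟩)
        omega

/-- For a strict transitively closed episode, the greedy mapping is pointwise
minimal among all valid mappings with values `≥ t`. -/
lemma greedy_min {s : List α} {t : ℕ} {G : Episode α} {m : ℕ → ℕ}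
    (h : GreedyFrom s t G m) :
    inS G → ∀ g : ℕ → ℕ, (∀ v ∈ G.nodes, t ≤ g v) →
    (∀ v ∈ G.nodes, ∃ hh : g v < s.length, s.get ⟨g v, hh⟩ = G.lab v) →
    (∀ u v, G.edge u v → g u < g v) →
    ∀ v ∈ G.nodes, m v ≤ g v := by
  induction h with
  | empty t G f hG => intro _ g _ _ _ v hv; simp [hG] at hv
  | step t G f v k hv ht hk hlab hmin hfv hrec ih =>
    intro hS g hgt hglab hgedge
    -- every node is mapped by `g` to an index `≥ k`
    have claimi : ∀ w ∈ G.nodes, k ≤ g w := by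
      by_contra hcon
      push_neg at hcon
      obtain ⟨v0, hv0, hlt0⟩ := hcon
      obtain ⟨w, hwS, hwmin⟩ :=
        (G.nodes.filter (fun w => g w < k)).exists_min_image g
          ⟨v0, Finset.mem_filter.mpr ⟨hv0, hlt0⟩⟩
      obtain ⟨hwG, hwlt⟩ := Finset.mem_filter.mp hwS
      have hsrc : G.IsSource w := by
        refine ⟨hwG, fun u hu => ?_⟩
        have h1 := hgedge u w hu
        have huS : u ∈ G.nodes.filter (fun w => g w < k) :=
          Finset.mem_filter.mpr ⟨(G.edge_mem hu).1, lt_trans h1 hwlt⟩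
        exact absurd (hwmin u huS) (not_le.mpr h1)
      obtain ⟨hwlen, hwlab⟩ := hglab w hwG
      exact hmin (g w) hwlen (hgt w hwG) hwlt ⟨w, hsrc, hwlab⟩
    -- every node other than the first greedy node is mapped by `g` beyond `k`
    have claimii : ∀ w ∈ G.nodes, w ≠ v → k + 1 ≤ g w := by
      intro w hw hne
      rcases lt_or_eq_of_le (claimi w hw) with h' | h'
      · omega
      · exfalso
        have hsrc : G.IsSource w := by
          refine ⟨hw, fun u hu => ?_⟩
          have h1 := hgedge u w hu
          have h2 := claimi u (G.edge_mem hu).1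
          omega
        obtain ⟨hlen', hlab'⟩ := hglab w hw
        have hgeteq : s.get ⟨g w, hlen'⟩ = s.get ⟨k, hk⟩ :=
          congrArg s.get (Fin.ext h'.symm)
        have hlabeq : G.lab w = G.lab v := by
          rw [← hlab', hgeteq, hlab]
        rcases hS.2.2 w hw v hv.1 hne hlabeq with hp | hp
        · exact hv.2 _ (hS.2.1 hp)
        · exact hsrc.2 _ (hS.2.1 hp)
    have hIH := ih (inS_eraseNode hS v) g
      (fun w hw => claimii w (Finset.mem_erase.mp hw).2 (Finset.mem_erase.mp hw).1)
      (fun w hw => hglab w (Finset.mem_erase.mp hw).2)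
      (fun u w e => hgedge u w e.1)
    intro w hwG
    by_cases hc : w = v
    · subst hc; rw [hfv]; exact claimi w hwG
    · exact hIH w (Finset.mem_erase.mpr ⟨hc, hwG⟩)

end Episode
open Episode in
/-- Let `G` be a strict transitively closed episode covered by `s`, and let
`k` be an index such that the suffix `s[k+1, L]` also covers `G`.  If
`m₁ = g(G; s)` and `m₂ = g(G; s[k+1, L])` are the greedy mappings (taken as
maps into positions of `s`), then `m₂(v) ≥ m₁(v)` for every node `v`. -/
theorem stmt8 {α : Type*} (G : Episode α) (hG : inS G) (s : List α)
    (hcov : Covers s G) (k : ℕ) (hcov' : Covers (s.drop k) G)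
    (m₁ m₂ : ℕ → ℕ) (h₁ : GreedyFrom s 0 G m₁) (h₂ : GreedyFrom s k G m₂) :
    ∀ v ∈ G.nodes, m₁ v ≤ m₂ v := by
  obtain ⟨hlab2, hedge2, _⟩ := greedy_valid h₂
  exact greedy_min h₁ hG m₂ (fun w _ => Nat.zero_le _) hlab2 hedge2
end

section
/- Fix a sequence s and a window size ρ, and fix either the fixed-window or the disjoint-window frequency measure. Every f-closed strict, transitively closed episode is i-closed: if G ∈ 𝒮 is f-closed, then icl(G) = G. -/
open scoped Classical

set_option linter.unusedSectionVars false
set_option linter.unusedVariables false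
namespace Episode
variable {α : Type*} [LinearOrder α] (s : List α) (ρ : ℕ) (G : Episode α)

/-- the list of new labels used in `clN`. -/
noncomputable def NL : List α :=
  (s.toFinset.filter
      (fun x => (∀ f, IsOcc s ρ G f → SymInWindow s f x) ∧
        ∀ v ∈ G.nodes, G.lab v ≠ x)).sort (· ≤ ·)

def bse (G : Episode α) : ℕ := G.nodes.sup id + 1

lemma clN_nodes : (clN s ρ G).nodes
    = G.nodes ∪ (Finset.range (NL s ρ G).length).image (fun i => bse G + i) := rfl

lemma clN_edge : (clN s ρ G).edge = G.edge := rfl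

lemma mem_NL {x : α} : x ∈ NL s ρ G ↔ x ∈ s.toFinset ∧
    (∀ f, IsOcc s ρ G f → SymInWindow s f x) ∧ ∀ v ∈ G.nodes, G.lab v ≠ x := by
  unfold NL
  rw [Finset.mem_sort, Finset.mem_filter]

lemma NL_nodup : (NL s ρ G).Nodup := Finset.sort_nodup _ _

lemma lt_bse {v : ℕ} (hv : v ∈ G.nodes) : v < bse G :=
  Nat.lt_succ_of_le (Finset.le_sup (f := id) hv)

lemma clN_lab_mem {v : ℕ} (hv : v ∈ G.nodes) : (clN s ρ G).lab v = G.lab v := by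
  show (if h : _ ∧ _ ∧ v ∉ G.nodes then _ else G.lab v) = G.lab v
  rw [dif_neg]
  rintro ⟨-, -, h⟩; exact h hv

lemma new_not_mem {i : ℕ} : bse G + i ∉ G.nodes := fun h => by
  have := lt_bse G h; omega

lemma clN_lab_new {i : ℕ} (hi : i < (NL s ρ G).length) :
    (clN s ρ G).lab (bse G + i) = (NL s ρ G).get ⟨i, hi⟩ := by
  show (if h : _ ∧ _ ∧ _ then (NL s ρ G).get ⟨bse G + i - bse G, h.2.1⟩ else _) = _
  refine (dif_pos (⟨Nat.le_add_right _ _, by simpa using hi, new_not_mem G⟩ :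
    bse G ≤ bse G + i ∧ bse G + i - bse G < (NL s ρ G).length ∧ bse G + i ∉ G.nodes)).trans ?_
  congr 1
  exact Fin.ext (by simp)

lemma episode_ext {G H : Episode α} (h1 : G.nodes = H.nodes)
    (h2 : G.edge = H.edge) (h3 : G.lab = H.lab) : G = H := by
  cases G; cases H; simp_all

lemma mem_N_cases {w : ℕ} (hw : w ∈ (clN s ρ G).nodes) :
    w ∈ G.nodes ∨ ∃ i : ℕ, ∃ hi : i < (NL s ρ G).length, w = bse G + i := by
  rw [clN_nodes, Finset.mem_union] at hw
  rcases hw with h | h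
  · exact Or.inl h
  · right
    simp only [Finset.mem_image, Finset.mem_range] at h
    obtain ⟨i, hi, rfl⟩ := h
    exact ⟨i, hi, rfl⟩

lemma NL_nil_of_empty (h : G.nodes = ∅) : NL s ρ G = [] := by
  unfold NL
  have : s.toFinset.filter
      (fun x => (∀ f, IsOcc s ρ G f → SymInWindow s f x) ∧
        ∀ v ∈ G.nodes, G.lab v ≠ x) = ∅ := by
    apply Finset.filter_false_of_mem
    intro x hx ⟨h1, h2⟩
    have he : IsEmpty {v // v ∈ G.nodes} := ⟨fun a => by
      simpa [h] using a.2⟩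
    have hf : IsOcc s ρ G (fun v => he.elim v) :=
      ⟨fun a => he.elim a, fun a => he.elim a, fun a => he.elim a, fun a => he.elim a⟩
    obtain ⟨i, -, ⟨u, -⟩, -⟩ := h1 _ hf
    exact he.elim u
  rw [this, Finset.sort_empty]

end Episode
namespace Episode
variable {α : Type*} [LinearOrder α] (s : List α) (ρ : ℕ) (G : Episode α)

noncomputable def incl : {v // v ∈ G.nodes} → {v // v ∈ (clN s ρ G).nodes} :=
  fun v => ⟨v.1, by rw [clN_nodes]; exact Finset.mem_union_left _ v.2⟩

lemma occ_restrict {f} (hf : IsOcc s ρ (clN s ρ G) f) :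
    IsOcc s ρ G (f ∘ incl s ρ G) := by
  obtain ⟨hinj, hlab, hedge, hspan⟩ := hf
  refine ⟨?_, ?_, ?_, fun u v => hspan _ _⟩
  · intro a b h
    have h2 := hinj h
    rw [Subtype.ext_iff] at h2 ⊢
    exact h2
  · intro v
    rw [Function.comp_apply, hlab]
    exact clN_lab_mem s ρ G v.2
  · intro u v h
    exact hedge ⟨u.1, (incl s ρ G u).2⟩ ⟨v.1, (incl s ρ G v).2⟩ h

lemma occ_extend {f} (hf : IsOcc s ρ G f) :
    ∃ f', IsOcc s ρ (clN s ρ G) f' ∧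
      (∀ v : {v // v ∈ G.nodes}, f' (incl s ρ G v) = f v) ∧
      ∀ w, (∃ u, f u ≤ f' w) ∧ ∃ v, f' w ≤ f v := by
  obtain ⟨hinj, hlab, hedge, hspan⟩ := hf
  have hsym : ∀ i (hi : i < (NL s ρ G).length), ∃ p : Fin s.length,
      s.get p = (NL s ρ G).get ⟨i, hi⟩ ∧ (∃ u, f u ≤ p) ∧ ∃ v, p ≤ f v := by
    intro i hi
    have hmem : (NL s ρ G).get ⟨i, hi⟩ ∈ NL s ρ G := List.get_mem _ _
    obtain ⟨-, hwin, -⟩ := (mem_NL s ρ G).1 hmem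
    obtain ⟨p, hp1, hp2, hp3⟩ := hwin f ⟨hinj, hlab, hedge, hspan⟩
    exact ⟨p, hp1, hp2, hp3⟩
  choose P hP1 hP2 hP3 using hsym
  have hidx : ∀ w : {v // v ∈ (clN s ρ G).nodes}, w.1 ∉ G.nodes →
      w.1 - bse G < (NL s ρ G).length ∧ w.1 = bse G + (w.1 - bse G) := by
    intro w hw
    rcases mem_N_cases s ρ G w.2 with h | ⟨i, hi, he⟩
    · exact absurd h hw
    · constructor <;> omega
  set F : {v // v ∈ (clN s ρ G).nodes} → Fin s.length :=
    fun w => if h : w.1 ∈ G.nodes then f ⟨w.1, h⟩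
      else P (w.1 - bse G) (hidx w h).1 with hF
  have hFmem : ∀ (w) (h : w.1 ∈ G.nodes), F w = f ⟨w.1, h⟩ := by
    intro w h; simp only [hF, dif_pos h]
  have hFnew : ∀ (w) (h : w.1 ∉ G.nodes), F w = P (w.1 - bse G) (hidx w h).1 := by
    intro w h; simp only [hF, dif_neg h]
  have hbd : ∀ w, (∃ u, f u ≤ F w) ∧ ∃ v, F w ≤ f v := by
    intro w
    by_cases h : w.1 ∈ G.nodes
    · rw [hFmem w h]; exact ⟨⟨⟨w.1, h⟩, le_refl _⟩, ⟨⟨w.1, h⟩, le_refl _⟩⟩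
    · rw [hFnew w h]; exact ⟨hP2 _ _, hP3 _ _⟩
  have hlabF : ∀ w, s.get (F w) = (clN s ρ G).lab w.1 := by
    intro w
    by_cases h : w.1 ∈ G.nodes
    · rw [hFmem w h, hlab, clN_lab_mem s ρ G h]
    · rw [hFnew w h, hP1]
      conv_rhs => rw [(hidx w h).2]
      rw [clN_lab_new]
  refine ⟨F, ⟨?_, hlabF, ?_, ?_⟩, ?_, hbd⟩
  · -- injectivity
    intro a b hab
    by_cases ha : a.1 ∈ G.nodes <;> by_cases hb : b.1 ∈ G.nodes
    · rw [hFmem a ha, hFmem b hb] at hab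
      have h2 := hinj hab
      rw [Subtype.ext_iff] at h2 ⊢
      exact h2
    · exfalso
      have h1 : s.get (F a) = G.lab a.1 := by rw [hFmem a ha]; exact hlab _
      have h2 : s.get (F b) = (NL s ρ G).get ⟨b.1 - bse G, (hidx b hb).1⟩ := by
        rw [hFnew b hb]; exact hP1 _ _
      have hmem : (NL s ρ G).get ⟨b.1 - bse G, (hidx b hb).1⟩ ∈ NL s ρ G :=
        List.get_mem _ _
      obtain ⟨-, -, hne⟩ := (mem_NL s ρ G).1 hmem
      exact hne a.1 ha (by rw [← h1, hab, h2])
    · exfalso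
      have h1 : s.get (F b) = G.lab b.1 := by rw [hFmem b hb]; exact hlab _
      have h2 : s.get (F a) = (NL s ρ G).get ⟨a.1 - bse G, (hidx a ha).1⟩ := by
        rw [hFnew a ha]; exact hP1 _ _
      have hmem : (NL s ρ G).get ⟨a.1 - bse G, (hidx a ha).1⟩ ∈ NL s ρ G :=
        List.get_mem _ _
      obtain ⟨-, -, hne⟩ := (mem_NL s ρ G).1 hmem
      exact hne b.1 hb (by rw [← h1, ← hab, h2])
    · have h2 : s.get (F a) = (NL s ρ G).get ⟨a.1 - bse G, (hidx a ha).1⟩ := by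
        rw [hFnew a ha]; exact hP1 _ _
      have h3 : s.get (F b) = (NL s ρ G).get ⟨b.1 - bse G, (hidx b hb).1⟩ := by
        rw [hFnew b hb]; exact hP1 _ _
      have : (NL s ρ G).get ⟨a.1 - bse G, (hidx a ha).1⟩
          = (NL s ρ G).get ⟨b.1 - bse G, (hidx b hb).1⟩ := by
        rw [← h2, ← h3, hab]
      have hij := (List.Nodup.get_inj_iff (NL_nodup s ρ G)).1 this
      have : a.1 - bse G = b.1 - bse G := congrArg Fin.val hij
      apply Subtype.ext
      rw [(hidx a ha).2, (hidx b hb).2, this]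
  · -- edges
    intro u v h
    have hu := (G.edge_mem h).1
    have hv := (G.edge_mem h).2
    rw [hFmem u hu, hFmem v hv]
    exact hedge ⟨u.1, hu⟩ ⟨v.1, hv⟩ h
  · -- span
    intro u v
    obtain ⟨-, u1, hu1⟩ := hbd u
    obtain ⟨⟨v1, hv1⟩, -⟩ := hbd v
    have := hspan u1 v1
    have h1 : (F u : ℕ) ≤ (f u1 : ℕ) := hu1
    have h2 : (f v1 : ℕ) ≤ (F v : ℕ) := hv1
    omega
  · intro v
    exact hFmem (incl s ρ G v) v.2

end Episode
namespace Episode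
variable {α : Type*} [LinearOrder α] (s : List α) (ρ : ℕ) (G : Episode α)

lemma window_length (a b : ℕ) :
    (window s a b).length = min (b + 1) s.length - a := by
  simp [window]

lemma window_bounds (a b : ℕ) (j : Fin (window s a b).length) :
    a + j.1 < s.length ∧ a + j.1 ≤ b := by
  have h2 : (j : ℕ) < min (b + 1) s.length - a := by
    rw [← window_length s a b]; exact j.2
  omega

lemma window_get (a b : ℕ) (j : Fin (window s a b).length) :
    (window s a b).get j = s.get ⟨a + j.1, (window_bounds s a b j).1⟩ := by
  simp only [window, List.get_eq_getElem, List.getElem_drop, List.getElem_take]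
  exact (List.getElem_drop ..).trans (List.getElem_take ..)

lemma G_edge_icl {x y : ℕ} (h : G.edge x y) : (icl s ρ G).edge x y := by
  refine ⟨(incl s ρ G ⟨x, (G.edge_mem h).1⟩).2, (incl s ρ G ⟨y, (G.edge_mem h).2⟩).2,
    fun f hf => ?_⟩
  exact hf.2.2.1 ⟨x, _⟩ ⟨y, _⟩ h

lemma covers_window_occ {a b : ℕ} (hab : b < a + ρ)
    (h : Covers (window s a b) G) :
    ∃ F, IsOcc s ρ G F ∧ ∀ v, a ≤ (F v : ℕ) ∧ (F v : ℕ) ≤ b := by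
  obtain ⟨f, hinj, hlab, hedge⟩ := h
  refine ⟨fun v => ⟨a + (f v).1, (window_bounds s a b (f v)).1⟩, ⟨?_, ?_, ?_, ?_⟩, ?_⟩
  · intro u v huv
    apply hinj
    have : a + (f u).1 = a + (f v).1 := congrArg Fin.val huv
    exact Fin.ext (by omega)
  · intro v
    rw [← hlab v, window_get]
  · intro u v h
    have := hedge u v h
    exact Fin.mk_lt_mk.2 (by simp only [Fin.lt_def] at this; omega)
  · intro u v
    have h1 := (window_bounds s a b (f u)).2
    simp only []
    omega
  · intro v
    refine ⟨by simp, ?_⟩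
    simpa using (window_bounds s a b (f v)).2

lemma covers_window_iff {a b : ℕ} (hab : b < a + ρ) :
    Covers (window s a b) G ↔ Covers (window s a b) (icl s ρ G) := by
  constructor
  · intro h
    obtain ⟨F, hF, hFb⟩ := covers_window_occ s ρ G hab h
    obtain ⟨F', hF', -, hbd⟩ := occ_extend s ρ G hF
    have hbd' : ∀ w, a ≤ (F' w : ℕ) ∧ (F' w : ℕ) ≤ b := by
      intro w
      obtain ⟨⟨u, hu⟩, v, hv⟩ := hbd w
      have h1 := (hFb u).1
      have h2 := (hFb v).2
      have h3 : (F u : ℕ) ≤ (F' w : ℕ) := hu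
      have h4 : (F' w : ℕ) ≤ (F v : ℕ) := hv
      omega
    refine ⟨fun w => ⟨(F' w : ℕ) - a, ?_⟩, ?_, ?_, ?_⟩
    · rw [window_length]
      have := (hbd' w).1; have := (hbd' w).2; have := (F' w).2
      omega
    · intro w1 w2 h
      apply hF'.1
      have : (F' w1 : ℕ) - a = (F' w2 : ℕ) - a := congrArg Fin.val h
      have := (hbd' w1).1; have := (hbd' w2).1
      exact Fin.ext (by omega)
    · intro w
      rw [window_get]
      have h5 := (hbd' w).1
      have hget : ∀ p : a + ((F' w : ℕ) - a) < s.length,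
          s.get ⟨a + ((F' w : ℕ) - a), p⟩ = s.get (F' w) := by
        intro p; congr 1; exact Fin.ext (by show a + ((F' w : ℕ) - a) = (F' w : ℕ); omega)
      rw [hget]
      exact hF'.2.1 w
    · intro u v huv
      obtain ⟨hx, hy, hall⟩ := huv
      have := hall F' hF'
      have heq1 : (⟨u.1, hx⟩ : {v // v ∈ (clN s ρ G).nodes}) = u := Subtype.ext rfl
      have heq2 : (⟨v.1, hy⟩ : {v // v ∈ (clN s ρ G).nodes}) = v := Subtype.ext rfl
      rw [heq1, heq2] at this
      have hlt : (F' u : ℕ) < (F' v : ℕ) := this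
      have := (hbd' u).1; have := (hbd' v).1
      exact Fin.mk_lt_mk.2 (by omega)
  · intro h
    obtain ⟨g, hinj, hlab, hedge⟩ := h
    refine ⟨fun v => g (incl s ρ G v), ?_, ?_, ?_⟩
    · intro u v h
      have h2 := hinj h
      have h2 := congrArg Subtype.val h2; apply Subtype.ext
      exact h2
    · intro v
      rw [hlab (incl s ρ G v)]
      exact clN_lab_mem s ρ G v.2
    · intro u v h
      exact hedge _ _ (G_edge_icl s ρ G h)

end Episode
namespace Episode
variable {α : Type*} [LinearOrder α] (s : List α) (ρ : ℕ) (G : Episode α)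

lemma freqF_congr {G1 G2 : Episode α}
    (h : ∀ a b : ℕ, b < a + ρ → (Covers (window s a b) G1 ↔ Covers (window s a b) G2)) :
    freqF s ρ G1 = freqF s ρ G2 := by
  unfold freqF
  congr 1
  apply Finset.filter_congr
  intro b _
  exact h (b + 1 - ρ) b (by omega)

lemma freqD_congr {G1 G2 : Episode α}
    (h : ∀ a b : ℕ, b < a + ρ → (Covers (window s a b) G1 ↔ Covers (window s a b) G2)) :
    freqD s ρ G1 = freqD s ρ G2 := by
  unfold freqD
  congr 1
  ext n
  simp only [Set.mem_setOf_eq]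
  constructor <;> rintro ⟨I, h1, h2⟩ <;>
    exact ⟨I, fun i => ⟨(h1 i).1, (h1 i).2.1, (h1 i).2.2.1,
      by
        have := (h1 i).2.2.2
        have hiff := h (I i).1 (I i).2 (h1 i).2.1
        tauto⟩, h2⟩

lemma icl_transClosed : (icl s ρ G).TransClosed := by
  intro u v h
  induction h with
  | single h => exact h
  | tail h1 h2 ih =>
    obtain ⟨ha, hb, hab⟩ := ih
    obtain ⟨hb', hc, hbc⟩ := h2
    refine ⟨ha, hc, fun f hf => lt_trans (hab f hf) ?_⟩
    have := hbc f hf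
    have he : (⟨_, hb'⟩ : {v // v ∈ (clN s ρ G).nodes}) = ⟨_, hb⟩ := Subtype.ext rfl
    rwa [he] at this

lemma icl_acyclic {f0} (hf0 : IsOcc s ρ (clN s ρ G) f0) : (icl s ρ G).Acyclic := by
  intro v hv
  obtain ⟨h1, h2, hall⟩ := icl_transClosed s ρ G hv
  have := hall f0 hf0
  have he : (⟨v, h1⟩ : {v // v ∈ (clN s ρ G).nodes}) = ⟨v, h2⟩ := Subtype.ext rfl
  rw [he] at this
  exact lt_irrefl _ this

lemma icl_lab_mem {v : ℕ} (hv : v ∈ G.nodes) : (icl s ρ G).lab v = G.lab v :=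
  clN_lab_mem s ρ G hv

lemma icl_strict (hG : inS G) : (icl s ρ G).Strict := by
  intro u hu v hv hne hlab
  have hu' : u ∈ (clN s ρ G).nodes := hu
  have hv' : v ∈ (clN s ρ G).nodes := hv
  rcases mem_N_cases s ρ G hu' with hum | ⟨i, hi, rfl⟩ <;>
    rcases mem_N_cases s ρ G hv' with hvm | ⟨j, hj, rfl⟩
  · -- both old
    have hl : G.lab u = G.lab v := by
      rwa [icl_lab_mem s ρ G hum, icl_lab_mem s ρ G hvm] at hlab
    rcases hG.2.2 u hum v hvm hne hl with h | h
    · exact Or.inl (Relation.TransGen.single (G_edge_icl s ρ G (hG.2.1 h)))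
    · exact Or.inr (Relation.TransGen.single (G_edge_icl s ρ G (hG.2.1 h)))
  · -- u old, v new
    exfalso
    have h1 : (icl s ρ G).lab u = G.lab u := icl_lab_mem s ρ G hum
    have h2 : (icl s ρ G).lab (bse G + j) = (NL s ρ G).get ⟨j, hj⟩ :=
      clN_lab_new s ρ G hj
    have hmem : (NL s ρ G).get ⟨j, hj⟩ ∈ NL s ρ G := List.get_mem _ _
    obtain ⟨-, -, hne2⟩ := (mem_NL s ρ G).1 hmem
    exact hne2 u hum (by rw [← h1, hlab, h2])
  · exfalso
    have h1 : (icl s ρ G).lab v = G.lab v := icl_lab_mem s ρ G hvm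
    have h2 : (icl s ρ G).lab (bse G + i) = (NL s ρ G).get ⟨i, hi⟩ :=
      clN_lab_new s ρ G hi
    have hmem : (NL s ρ G).get ⟨i, hi⟩ ∈ NL s ρ G := List.get_mem _ _
    obtain ⟨-, -, hne2⟩ := (mem_NL s ρ G).1 hmem
    exact hne2 v hvm (by rw [← h1, ← hlab, h2])
  · exfalso
    have h2 : (icl s ρ G).lab (bse G + i) = (NL s ρ G).get ⟨i, hi⟩ :=
      clN_lab_new s ρ G hi
    have h3 : (icl s ρ G).lab (bse G + j) = (NL s ρ G).get ⟨j, hj⟩ :=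
      clN_lab_new s ρ G hj
    have : (NL s ρ G).get ⟨i, hi⟩ = (NL s ρ G).get ⟨j, hj⟩ := by
      rw [← h2, ← h3, hlab]
    have hij := (List.Nodup.get_inj_iff (NL_nodup s ρ G)).1 this
    exact hne (by have := congrArg Fin.val hij; simp only [] at this; omega)

lemma subep_G_icl : Subep G (icl s ρ G) := by
  refine ⟨G.nodes, ?_, rfl, ?_⟩
  · intro v hv
    exact (incl s ρ G ⟨v, hv⟩).2
  · rintro t ⟨f, hinj, hlab, hedge⟩
    refine ⟨fun v => f ⟨v.1, v.2⟩, ?_, ?_, ?_⟩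
    · intro a b h
      have h2 := hinj h
      rw [Subtype.ext_iff] at h2 ⊢
      exact h2
    · intro v
      rw [hlab ⟨v.1, v.2⟩]
      exact icl_lab_mem s ρ G v.2
    · intro u v h
      exact hedge ⟨u.1, u.2⟩ ⟨v.1, v.2⟩ ⟨u.2, v.2, G_edge_icl s ρ G h⟩

/-- extension of `G` with a fresh top node. -/
def topExt (G : Episode α) : Episode α where
  nodes := insert (bse G) G.nodes
  edge := fun x y => G.edge x y ∨ (x ∈ G.nodes ∧ y = bse G)
  lab := G.lab
  edge_mem := by
    rintro x y (h | ⟨hx, rfl⟩)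
    · exact ⟨Finset.mem_insert_of_mem (G.edge_mem h).1,
        Finset.mem_insert_of_mem (G.edge_mem h).2⟩
    · exact ⟨Finset.mem_insert_of_mem hx, Finset.mem_insert_self _ _⟩

lemma bse_not_mem : bse G ∉ G.nodes := fun h => lt_irrefl _ (lt_bse G h)

lemma tg_mem {a b : ℕ} (h : Relation.TransGen G.edge a b) : a ∈ G.nodes := by
  induction h with
  | single h => exact (G.edge_mem h).1
  | tail h1 h2 ih => exact ih

lemma tg_topExt {a c : ℕ} (h : Relation.TransGen (topExt G).edge a c) :
    Relation.TransGen G.edge a c ∨ (c = bse G ∧ a ∈ G.nodes) := by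
  induction h with
  | single h =>
    rcases h with h | ⟨hx, rfl⟩
    · exact Or.inl (Relation.TransGen.single h)
    · exact Or.inr ⟨rfl, hx⟩
  | tail h1 h2 ih =>
    rcases h2 with h2 | ⟨hb, rfl⟩
    · rcases ih with ih | ⟨rfl, ha⟩
      · exact Or.inl (ih.tail h2)
      · exact absurd (G.edge_mem h2).1 (bse_not_mem G)
    · rcases ih with ih | ⟨rfl, ha⟩
      · exact Or.inr ⟨rfl, tg_mem G ih⟩
      · exact absurd hb (bse_not_mem G)

lemma inS_topExt (hG : inS G) : inS (topExt G) := by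
  obtain ⟨hac, htc, hst⟩ := hG
  refine ⟨?_, ?_, ?_⟩
  · intro v hv
    rcases tg_topExt G hv with h | ⟨rfl, ha⟩
    · exact hac v h
    · exact bse_not_mem G ha
  · intro u v h
    rcases tg_topExt G h with h | ⟨rfl, ha⟩
    · exact Or.inl (htc h)
    · exact Or.inr ⟨ha, rfl⟩
  · intro u hu v hv hne hlab
    rcases Finset.mem_insert.1 hu with rfl | hu <;>
      rcases Finset.mem_insert.1 hv with rfl | hv
    · exact absurd rfl hne
    · exact Or.inr (Relation.TransGen.single (Or.inr ⟨hv, rfl⟩))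
    · exact Or.inl (Relation.TransGen.single (Or.inr ⟨hu, rfl⟩))
    · rcases hst u hu v hv hne hlab with h | h
      · exact Or.inl (Relation.TransGen.mono (fun _ _ => Or.inl) _ _ h)
      · exact Or.inr (Relation.TransGen.mono (fun _ _ => Or.inl) _ _ h)

lemma properSubep_topExt : ProperSubep G (topExt G) := by
  constructor
  · refine ⟨G.nodes, fun v hv => Finset.mem_insert_of_mem hv, rfl, ?_⟩
    rintro t ⟨f, hinj, hlab, hedge⟩
    refine ⟨fun v => f ⟨v.1, v.2⟩, ?_, ?_, ?_⟩
    · intro a b h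
      have h2 := hinj h
      rw [Subtype.ext_iff] at h2 ⊢
      exact h2
    · intro v
      exact hlab ⟨v.1, v.2⟩
    · intro u v h
      exact hedge ⟨u.1, u.2⟩ ⟨v.1, v.2⟩ ⟨u.2, v.2, Or.inl h⟩
  · rintro ⟨U, hUsub, hUcard, -⟩
    have h1 : U.card ≤ G.nodes.card := Finset.card_le_card hUsub
    have h2 : (topExt G).nodes.card = G.nodes.card + 1 :=
      Finset.card_insert_of_notMem (bse_not_mem G)
    omega

lemma covers_topExt {t : List α} (h : Covers t (topExt G)) : Covers t G := by
  obtain ⟨f, hinj, hlab, hedge⟩ := h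
  refine ⟨fun v => f ⟨v.1, Finset.mem_insert_of_mem v.2⟩, ?_, ?_, ?_⟩
  · intro a b h
    have h2 := hinj h
    rw [Subtype.ext_iff] at h2 ⊢
    exact h2
  · intro v
    exact hlab ⟨v.1, _⟩
  · intro u v h
    exact hedge _ _ (Or.inl h)

end Episode
namespace Episode
variable {α : Type*} [LinearOrder α]

lemma inj_on_of_mono {T : Finset ℕ} {r : ℕ → ℕ → Prop} {pf : ℕ → ℕ}
    (htot : ∀ u ∈ T, ∀ v ∈ T, u ≠ v → r u v ∨ r v u)
    (hp : ∀ u ∈ T, ∀ v ∈ T, r u v → pf u < pf v) :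
    ∀ u ∈ T, ∀ v ∈ T, pf u = pf v → u = v := by
  intro u hu v hv he
  by_contra hne
  rcases htot u hu v hv hne with h | h
  · exact absurd he (Nat.ne_of_lt (hp u hu v hv h))
  · exact absurd he.symm (Nat.ne_of_lt (hp v hv u hu h))

lemma chain_unique (T : Finset ℕ) :
    ∀ (r : ℕ → ℕ → Prop) (pf g : ℕ → ℕ),
    (∀ u ∈ T, ∀ v ∈ T, u ≠ v → r u v ∨ r v u) →
    (∀ u ∈ T, ∀ v ∈ T, r u v → pf u < pf v) →
    (∀ u ∈ T, ∀ v ∈ T, r u v → g u < g v) →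
    T.image pf = T.image g →
    ∀ v ∈ T, g v = pf v := by
  induction T using Finset.strongInduction with
  | _ T ih =>
    intro r pf g htot hp hg him v hv
    have hne : T.Nonempty := ⟨v, hv⟩
    have hine : (T.image pf).Nonempty := hne.image _
    obtain ⟨v0, hv0T, hv0⟩ := Finset.mem_image.1 ((T.image pf).max'_mem hine)
    have hmax : ∀ u ∈ T, pf u ≤ pf v0 := by
      intro u hu
      rw [hv0]
      exact Finset.le_max' _ _ (Finset.mem_image_of_mem _ hu)
    have hbelow : ∀ u ∈ T, u ≠ v0 → r u v0 := by
      intro u hu hne'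
      rcases htot u hu v0 hv0T hne' with h | h
      · exact h
      · exact absurd (hmax u hu) (not_le.2 (hp v0 hv0T u hu h))
    have hgmax : ∀ u ∈ T, g u ≤ g v0 := by
      intro u hu
      rcases eq_or_ne u v0 with rfl | hne'
      · exact le_refl _
      · exact le_of_lt (hg u hu v0 hv0T (hbelow u hu hne'))
    have hgv0 : g v0 = pf v0 := by
      have h1 : g v0 = (T.image g).max' (hne.image _) := by
        apply le_antisymm
        · exact Finset.le_max' _ _ (Finset.mem_image_of_mem _ hv0T)
        · exact Finset.max'_le _ _ _ (by
            intro k hk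
            obtain ⟨u, hu, rfl⟩ := Finset.mem_image.1 hk
            exact hgmax u hu)
      rw [h1, hv0]
      congr 1
      exact him.symm
    rcases eq_or_ne v v0 with rfl | hvne
    · exact hgv0
    · have hpinj := inj_on_of_mono htot hp
      have hginj := inj_on_of_mono htot hg
      have herase : ∀ (f : ℕ → ℕ), (∀ u ∈ T, ∀ w ∈ T, f u = f w → u = w) →
          (T.erase v0).image f = (T.image f).erase (f v0) := by
        intro f hfinj
        ext k
        simp only [Finset.mem_image, Finset.mem_erase]
        constructor
        · rintro ⟨u, ⟨hu1, hu2⟩, rfl⟩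
          exact ⟨fun he => hu1 (hfinj u hu2 v0 hv0T he), u, hu2, rfl⟩
        · rintro ⟨hk, u, hu, rfl⟩
          exact ⟨u, ⟨fun he => hk (by rw [he]), hu⟩, rfl⟩
      have him' : (T.erase v0).image pf = (T.erase v0).image g := by
        rw [herase pf hpinj, herase g hginj, him, hgv0]
      exact ih (T.erase v0) (Finset.erase_ssubset hv0T) r pf g
        (fun u hu w hw => htot u (Finset.mem_of_mem_erase hu) w (Finset.mem_of_mem_erase hw))
        (fun u hu w hw => hp u (Finset.mem_of_mem_erase hu) w (Finset.mem_of_mem_erase hw))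
        (fun u hu w hw => hg u (Finset.mem_of_mem_erase hu) w (Finset.mem_of_mem_erase hw))
        him' v (Finset.mem_erase.2 ⟨hvne, hv⟩)

lemma tg_union {r : ℕ → ℕ → Prop} {y x a c : ℕ}
    (h : Relation.TransGen (fun u v => r u v ∨ (u, v) = (y, x)) a c) :
    Relation.TransGen r a c ∨
      (Relation.ReflTransGen r a y ∧ Relation.ReflTransGen r x c) := by
  induction h with
  | single h =>
    rcases h with h | h
    · exact Or.inl (Relation.TransGen.single h)
    · rw [Prod.mk.injEq] at h
      obtain ⟨rfl, rfl⟩ := h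
      exact Or.inr ⟨Relation.ReflTransGen.refl, Relation.ReflTransGen.refl⟩
  | tail h1 h2 ih =>
    rcases h2 with h2 | h2
    · rcases ih with ih | ⟨ih1, ih2⟩
      · exact Or.inl (ih.tail h2)
      · exact Or.inr ⟨ih1, ih2.tail h2⟩
    · rw [Prod.mk.injEq] at h2
      obtain ⟨rfl, rfl⟩ := h2
      rcases ih with ih | ⟨ih1, -⟩
      · exact Or.inr ⟨ih.to_reflTransGen, Relation.ReflTransGen.refl⟩
      · exact Or.inr ⟨ih1, Relation.ReflTransGen.refl⟩

end Episode
namespace Episode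
variable {α : Type*} [LinearOrder α] (s : List α) (ρ : ℕ) (G : Episode α)

lemma clN_nodes_of_nil (hNL : NL s ρ G = []) : (clN s ρ G).nodes = G.nodes := by
  rw [clN_nodes, hNL]
  simp

lemma icl_eq_of_nil (hNL : NL s ρ G = [])
    (hsub : ∀ x y, (icl s ρ G).edge x y → G.edge x y) : icl s ρ G = G := by
  apply episode_ext
  · exact clN_nodes_of_nil s ρ G hNL
  · funext x
    funext y
    exact propext ⟨hsub x y, fun h => G_edge_icl s ρ G h⟩
  · show (clN s ρ G).lab = G.lab
    funext v
    show (if h : _ ∧ v - bse G < (NL s ρ G).length ∧ _ then _ else G.lab v) = G.lab v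
    apply dif_neg
    rintro ⟨-, h2, -⟩
    rw [hNL] at h2
    simp at h2

lemma not_subep_icl_of_nil (hG : inS G) (hNL : NL s ρ G = []) {f0}
    (hf0 : IsOcc s ρ (clN s ρ G) f0) (hne : icl s ρ G ≠ G) :
    ¬ Subep (icl s ρ G) G := by
  have hnodes : (clN s ρ G).nodes = G.nodes := clN_nodes_of_nil s ρ G hNL
  have hm : ∀ {v : ℕ}, v ∈ G.nodes → v ∈ (clN s ρ G).nodes :=
    fun h => (incl s ρ G ⟨_, h⟩).2
  have icl_lt : ∀ {u v : ℕ} (h : (icl s ρ G).edge u v)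
      (hu : u ∈ (clN s ρ G).nodes) (hv : v ∈ (clN s ρ G).nodes),
      f0 ⟨u, hu⟩ < f0 ⟨v, hv⟩ := by
    intro u v h hu hv
    obtain ⟨h1, h2, hall⟩ := h
    have h3 := hall f0 hf0
    have e1 : (⟨u, h1⟩ : {w // w ∈ (clN s ρ G).nodes}) = ⟨u, hu⟩ := Subtype.ext rfl
    have e2 : (⟨v, h2⟩ : {w // w ∈ (clN s ρ G).nodes}) = ⟨v, hv⟩ := Subtype.ext rfl
    rwa [e1, e2] at h3
  obtain ⟨x, y, hIxy, hGxy⟩ : ∃ x y, (icl s ρ G).edge x y ∧ ¬ G.edge x y := by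
    by_contra hc
    push_neg at hc
    apply hne
    apply icl_eq_of_nil s ρ G hNL
    intro x y hxy
    by_contra hg
    exact hg (hc x y hxy)
  have hx' : x ∈ (clN s ρ G).nodes := hIxy.1
  have hy' : y ∈ (clN s ρ G).nodes := hIxy.2.1
  have hx : x ∈ G.nodes := by rwa [hnodes] at hx'
  have hy : y ∈ G.nodes := by rwa [hnodes] at hy'
  have hxne : x ≠ y := by
    intro heq
    subst heq
    have h1 := icl_lt hIxy hx' hx'
    exact lt_irrefl _ h1
  have hlabne : G.lab x ≠ G.lab y := by
    intro hl
    rcases hG.2.2 x hx y hy hxne hl with h | h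
    · exact hGxy (hG.2.1 h)
    · have hyx : (icl s ρ G).edge y x := G_edge_icl s ρ G (hG.2.1 h)
      exact lt_irrefl _ (lt_trans (icl_lt hIxy hx' hy') (icl_lt hyx hy' hx'))
  -- the relation R : G.edge extended with the pair (y, x), transitively
  set R : ℕ → ℕ → Prop :=
    fun u v => Relation.TransGen (fun a c => G.edge a c ∨ (a, c) = (y, x)) u v with hRdef
  have hRirr : ∀ v, ¬ R v v := by
    intro v hv
    rcases tg_union hv with h | ⟨h1, h2⟩
    · exact hG.1 v h
    · have h3 : Relation.ReflTransGen G.edge x y := h2.trans h1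
      rcases h3.cases_head with heq | ⟨c, hc1, hc2⟩
      · exact hxne heq
      · exact hGxy (hG.2.1 (Relation.TransGen.head' hc1 hc2))
  have hRtrans : ∀ {a b c}, R a b → R b c → R a c := fun h1 h2 => h1.trans h2
  have hRedge : ∀ {u v}, G.edge u v → R u v :=
    fun h => Relation.TransGen.single (Or.inl h)
  have hRyx : R y x := Relation.TransGen.single (Or.inr rfl)
  -- the key function
  set M := bse G with hM
  set d : ℕ → ℕ := fun v => (G.nodes.filter (fun u => R u v)).card with hd
  set key : ℕ → ℕ := fun v => d v * M + v with hkeydef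
  have hdlt : ∀ u ∈ G.nodes, ∀ v, R u v → d u < d v := by
    intro u hu v h
    apply Finset.card_lt_card
    constructor
    · intro w hw
      obtain ⟨hw1, hw2⟩ := Finset.mem_filter.1 hw
      exact Finset.mem_filter.2 ⟨hw1, hRtrans hw2 h⟩
    · intro hsub
      have h2 : u ∈ G.nodes.filter (fun w => R w u) :=
        hsub (Finset.mem_filter.2 ⟨hu, h⟩)
      exact hRirr u (Finset.mem_filter.1 h2).2
  have hkey : ∀ u ∈ G.nodes, ∀ v, R u v → key u < key v := by
    intro u hu v h
    have h1 := hdlt u hu v h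
    have h2 : u < M := lt_bse G hu
    have h3 : (d u + 1) * M ≤ d v * M := Nat.mul_le_mul_right _ h1
    calc d u * M + u < d u * M + M := by omega
      _ = (d u + 1) * M := by ring
      _ ≤ d v * M := h3
      _ ≤ d v * M + v := Nat.le_add_right _ _
  have hkeyinj : ∀ u ∈ G.nodes, ∀ v ∈ G.nodes, key u = key v → u = v := by
    intro u hu v hv he
    have h2u : u < M := lt_bse G hu
    have h2v : v < M := lt_bse G hv
    have e1 : u = (d u * M + u) % M := by
      rw [Nat.add_comm, Nat.add_mul_mod_self_right, Nat.mod_eq_of_lt h2u]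
    have e2 : v = (d v * M + v) % M := by
      rw [Nat.add_comm, Nat.add_mul_mod_self_right, Nat.mod_eq_of_lt h2v]
    rw [e1, e2]
    have he' : d u * M + u = d v * M + v := he
    rw [he']
  -- enumeration of the nodes in key-increasing order
  set n := G.nodes.card with hn
  set e0 : Fin n ≃o {v // v ∈ G.nodes} := G.nodes.orderIsoOfFin rfl with he0
  set π : Equiv.Perm (Fin n) := Tuple.sort (fun i => key (e0 i).1) with hπ
  set e : Fin n → ℕ := fun i => (e0 (π i)).1 with he
  have he_mem : ∀ i, e i ∈ G.nodes := fun i => (e0 (π i)).2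
  have hkey_mono : StrictMono (fun i => key (e i)) := by
    have hmono : Monotone ((fun i => key (e0 i).1) ∘ π) := Tuple.monotone_sort _
    apply hmono.strictMono_of_injective
    intro i j hij
    have h1 : key (e i) = key (e j) := hij
    have h2 : e i = e j := hkeyinj _ (he_mem i) _ (he_mem j) h1
    have h3 : e0 (π i) = e0 (π j) := Subtype.ext h2
    exact π.injective (e0.injective h3)
  set p : {v // v ∈ G.nodes} → Fin n := fun v => π.symm (e0.symm v) with hp
  have hep : ∀ v, e (p v) = v.1 := by
    intro v
    show (e0 (π (π.symm (e0.symm v)))).1 = v.1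
    rw [Equiv.apply_symm_apply]
    rw [OrderIso.apply_symm_apply]
  have he_inj : Function.Injective e := by
    intro i j hij
    exact π.injective (e0.injective (Subtype.ext hij))
  have hpe : ∀ (i : Fin n) (h : e i ∈ G.nodes), p ⟨e i, h⟩ = i := by
    intro i h
    apply he_inj
    rw [hep ⟨e i, h⟩]
  have hp_lt : ∀ u v : {v // v ∈ G.nodes}, key u.1 < key v.1 ↔ p u < p v := by
    intro u v
    have h1 := hkey_mono.lt_iff_lt (a := p u) (b := p v)
    rw [hep u, hep v] at h1
    exact h1
  have hp_mono : ∀ u v : {v // v ∈ G.nodes}, G.edge u.1 v.1 → p u < p v :=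
    fun u v h => (hp_lt u v).1 (hkey u.1 u.2 v.1 (hRedge h))
  -- the witnessing sequence
  set t : List α := List.ofFn (fun i : Fin n => G.lab (e i)) with ht
  have hlen : t.length = n := List.length_ofFn
  have hget : ∀ j : Fin t.length, t.get j = G.lab (e (Fin.cast hlen j)) := by
    intro j
    exact List.get_ofFn (fun i : Fin n => G.lab (e i)) j
  -- the contradiction
  rintro ⟨U, hUsub, hUcard, hcov⟩
  have hIcard : (icl s ρ G).nodes.card = G.nodes.card := by
    show (clN s ρ G).nodes.card = G.nodes.card
    rw [hnodes]
  have hUeq : U = G.nodes :=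
    Finset.eq_of_subset_of_card_le hUsub (by rw [hUcard, hIcard])
  subst hUeq
  have hcovG : Covers t (G.restrict G.nodes) := by
    refine ⟨fun v => Fin.cast hlen.symm (p ⟨v.1, v.2⟩), ?_, ?_, ?_⟩
    · intro a b h
      have hv : ((Fin.cast hlen.symm (p ⟨a.1, a.2⟩)) : ℕ)
          = ((Fin.cast hlen.symm (p ⟨b.1, b.2⟩)) : ℕ) := congrArg Fin.val h
      have h1 : p ⟨a.1, a.2⟩ = p ⟨b.1, b.2⟩ := Fin.ext hv
      have h2 := e0.symm.injective (π.symm.injective h1)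
      rw [Subtype.ext_iff] at h2 ⊢
      exact h2
    · intro v
      rw [hget]
      show G.lab (e (Fin.cast hlen (Fin.cast hlen.symm (p ⟨v.1, v.2⟩)))) = _
      have hc : Fin.cast hlen (Fin.cast hlen.symm (p ⟨v.1, v.2⟩)) = p ⟨v.1, v.2⟩ :=
        Fin.ext rfl
      rw [hc, hep ⟨v.1, v.2⟩]
      rfl
    · rintro u v ⟨-, -, h⟩
      have := hp_mono ⟨u.1, u.2⟩ ⟨v.1, v.2⟩ h
      exact Fin.mk_lt_mk.2 this
  obtain ⟨g, hginj, hglab, hgedge⟩ := hcov t hcovG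
  -- forced positions via the chain-uniqueness lemma
  set pfn : ℕ → ℕ := fun v => if h : v ∈ G.nodes then (p ⟨v, h⟩ : ℕ) else 0 with hpfn
  set gfn : ℕ → ℕ := fun v => if h : v ∈ G.nodes then (g ⟨v, hm h⟩ : ℕ) else 0 with hgfn
  have hpfn_eq : ∀ {v} (h : v ∈ G.nodes), pfn v = (p ⟨v, h⟩ : ℕ) := by
    intro v h; simp only [hpfn, dif_pos h]
  have hgfn_eq : ∀ {v} (h : v ∈ G.nodes), gfn v = (g ⟨v, hm h⟩ : ℕ) := by
    intro v h; simp only [hgfn, dif_pos h]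
  have hglab' : ∀ {v} (h : v ∈ G.nodes), t.get (g ⟨v, hm h⟩) = G.lab v := by
    intro v h
    rw [hglab ⟨v, hm h⟩]
    exact icl_lab_mem s ρ G h
  have hforced : ∀ c : α, ∀ v ∈ G.nodes, G.lab v = c → gfn v = pfn v := by
    intro c
    set T : Finset ℕ := G.nodes.filter (fun u => G.lab u = c) with hT
    have hTsub : ∀ {u}, u ∈ T → u ∈ G.nodes := fun h => (Finset.mem_filter.1 h).1
    have hTlab : ∀ {u}, u ∈ T → G.lab u = c := fun h => (Finset.mem_filter.1 h).2
    have htot : ∀ u ∈ T, ∀ v ∈ T, u ≠ v → G.edge u v ∨ G.edge v u := by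
      intro u hu v hv hne'
      rcases hG.2.2 u (hTsub hu) v (hTsub hv) hne'
        (by rw [hTlab hu, hTlab hv]) with h | h
      · exact Or.inl (hG.2.1 h)
      · exact Or.inr (hG.2.1 h)
    have hpT : ∀ u ∈ T, ∀ v ∈ T, G.edge u v → pfn u < pfn v := by
      intro u hu v hv h
      rw [hpfn_eq (hTsub hu), hpfn_eq (hTsub hv)]
      exact hp_mono _ _ h
    have hgT : ∀ u ∈ T, ∀ v ∈ T, G.edge u v → gfn u < gfn v := by
      intro u hu v hv h
      rw [hgfn_eq (hTsub hu), hgfn_eq (hTsub hv)]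
      exact hgedge _ _ (G_edge_icl s ρ G h)
    have hsubim : T.image gfn ⊆ T.image pfn := by
      intro k hk
      obtain ⟨v, hvT, rfl⟩ := Finset.mem_image.1 hk
      have hv := hTsub hvT
      set i : Fin n := Fin.cast hlen (g ⟨v, hm hv⟩) with hi
      have hu : e i ∈ G.nodes := he_mem i
      have hulab : G.lab (e i) = c := by
        have h1 := hget (g ⟨v, hm hv⟩)
        rw [hglab' hv] at h1
        rw [← hi] at h1
        rw [← h1, hTlab hvT]
      refine Finset.mem_image.2 ⟨e i, Finset.mem_filter.2 ⟨hu, hulab⟩, ?_⟩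
      rw [hpfn_eq hu, hpe i hu, hgfn_eq hv]
      rfl
    have hcard1 : (T.image pfn).card = T.card := by
      apply Finset.card_image_of_injOn
      intro a ha b hb h
      exact inj_on_of_mono htot hpT a ha b hb h
    have hcard2 : (T.image gfn).card = T.card := by
      apply Finset.card_image_of_injOn
      intro a ha b hb h
      exact inj_on_of_mono htot hgT a ha b hb h
    have him : T.image pfn = T.image gfn :=
      (Finset.eq_of_subset_of_card_le hsubim (by rw [hcard1, hcard2])).symm
    intro v hv hvc
    exact chain_unique T G.edge pfn gfn htot hpT hgT him v
      (Finset.mem_filter.2 ⟨hv, hvc⟩)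
  have hfx : gfn x = pfn x := hforced (G.lab x) x hx rfl
  have hfy : gfn y = pfn y := hforced (G.lab y) y hy rfl
  have hgxy : (g ⟨x, hm hx⟩ : ℕ) < (g ⟨y, hm hy⟩ : ℕ) := hgedge ⟨x, hm hx⟩ ⟨y, hm hy⟩ hIxy
  have hpxy : (p ⟨x, hx⟩ : ℕ) < (p ⟨y, hy⟩ : ℕ) := by
    rw [← hpfn_eq hx, ← hpfn_eq hy, ← hfx, ← hfy, hgfn_eq hx, hgfn_eq hy]
    exact hgxy
  have hkxy : key x < key y := by
    have := (hp_lt ⟨x, hx⟩ ⟨y, hy⟩).2 (Fin.lt_def.2 hpxy)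
    exact this
  have hkyx : key y < key x := hkey y hy x hRyx
  omega

end Episode
open Episode in
theorem stmt9' {α : Type*} [LinearOrder α] (s : List α) (ρ : ℕ)
    (G : Episode α) (hG : inS G) :
    (FClosedF s ρ G → icl s ρ G = G) ∧ (FClosedD s ρ G → icl s ρ G = G) := by
  suffices h : icl s ρ G ≠ G → ∃ H : Episode α, inS H ∧ ProperSubep G H ∧
      (∀ a b : ℕ, b < a + ρ → (Covers (window s a b) G ↔ Covers (window s a b) H)) by
    constructor
    · intro hf
      by_contra hne
      obtain ⟨H, h1, h2, h3⟩ := h hne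
      exact hf ⟨H, h1, h2, (freqF_congr s ρ h3).symm⟩
    · intro hf
      by_contra hne
      obtain ⟨H, h1, h2, h3⟩ := h hne
      exact hf ⟨H, h1, h2, (freqD_congr s ρ h3).symm⟩
  intro hne
  by_cases hocc : ∃ f0, IsOcc s ρ (clN s ρ G) f0
  · obtain ⟨f0, hf0⟩ := hocc
    refine ⟨icl s ρ G,
      ⟨icl_acyclic s ρ G hf0, icl_transClosed s ρ G, icl_strict s ρ G hG⟩,
      ⟨subep_G_icl s ρ G, ?_⟩, fun a b hab => covers_window_iff s ρ G hab⟩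
    by_cases hNL : NL s ρ G = []
    · exact not_subep_icl_of_nil s ρ G hG hNL hf0 hne
    · rintro ⟨U, hUsub, hUcard, -⟩
      have h1 : U.card ≤ G.nodes.card := Finset.card_le_card hUsub
      have h2 : G.nodes.card < (icl s ρ G).nodes.card := by
        apply Finset.card_lt_card
        refine (Finset.ssubset_iff_of_subset
          (fun v hv => (incl s ρ G ⟨v, hv⟩).2)).2 ⟨bse G, ?_, bse_not_mem G⟩
        show bse G ∈ (clN s ρ G).nodes
        rw [clN_nodes]
        apply Finset.mem_union_right
        refine Finset.mem_image.2 ⟨0, Finset.mem_range.2 ?_, by omega⟩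
        exact List.length_pos_iff.2 hNL
      omega
  · push_neg at hocc
    refine ⟨topExt G, inS_topExt G hG, properSubep_topExt G, ?_⟩
    intro a b hab
    constructor
    · intro hc
      exfalso
      obtain ⟨F, hF, -⟩ := covers_window_occ s ρ G hab hc
      obtain ⟨F', hF', -⟩ := occ_extend s ρ G hF
      exact hocc F' hF'
    · intro hc
      exfalso
      have hc2 := covers_topExt G hc
      obtain ⟨F, hF, -⟩ := covers_window_occ s ρ G hab hc2
      obtain ⟨F', hF', -⟩ := occ_extend s ρ G hF
      exact hocc F' hF'

open Episode in
/-- Every f-closed strict transitively closed episode (w.r.t. either the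
fixed-window or the disjoint-window frequency) is i-closed. -/
theorem stmt9 {α : Type*} [LinearOrder α] (s : List α) (ρ : ℕ)
    (G : Episode α) (hG : inS G) :
    (FClosedF s ρ G → icl s ρ G = G) ∧ (FClosedD s ρ G → icl s ρ G = G) := by
  exact stmt9' s ρ G hG
end

section
/- Let G be a strict, transitively closed episode, let e = (x, y) be an edge not in E(G), and let H = G + e. Assume H is a directed acyclic graph. Then H is transitively closed (and hence a strict, transitively closed episode) if and only if (x, c) ∈ E(G) for every child c of y in G and (p, y) ∈ E(G) for every parent p of x in G. -/
open scoped Classical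

open Episode in
/-- Let `G ∈ 𝒮`, let `e = (x,y)` be an edge not in `E(G)` and let `H = G + e`.
If `H` is a DAG, then `H ∈ 𝒮` (in particular transitively closed) iff there is
an edge in `G` from `x` to every child of `y` and from every parent of `x` to
`y`. -/
theorem stmt11 {α : Type*} (G : Episode α) (hG : inS G) (x y : ℕ)
    (hx : x ∈ G.nodes) (hy : y ∈ G.nodes) (he : ¬ G.edge x y)
    (hdag : (G.addEdge (x, y)).Acyclic) :
    inS (G.addEdge (x, y)) ↔
      ((∀ c, G.edge y c → G.edge x c) ∧ ∀ p, G.edge p x → G.edge p y) := by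
  constructor
  · rintro ⟨hA, hT, hS⟩
    constructor
    · intro c hcY
      have hxc : (G.addEdge (x, y)).edge x c :=
        hT (Relation.TransGen.head (Or.inr rfl) (Relation.TransGen.single (Or.inl hcY)))
      rcases hxc with h | h
      · exact h
      · exfalso
        have hcy : c = y := congrArg Prod.snd h
        subst hcy
        exact hG.1 c (Relation.TransGen.single hcY)
    · intro p hpX
      have hpy : (G.addEdge (x, y)).edge p y :=
        hT (Relation.TransGen.head (Or.inl hpX) (Relation.TransGen.single (Or.inr rfl)))
      rcases hpy with h | h
      · exact h
      · exfalso
        have hpx : p = x := congrArg Prod.fst h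
        subst hpx
        exact hG.1 p (Relation.TransGen.single hpX)
  · rintro ⟨hchild, hpar⟩
    have comp : ∀ a b c, (G.addEdge (x, y)).edge a b → (G.addEdge (x, y)).edge b c →
        (G.addEdge (x, y)).edge a c := by
      rintro a b c (hab | hab) (hbc | hbc)
      · exact Or.inl (hG.2.1 ((Relation.TransGen.single hab).trans
          (Relation.TransGen.single hbc)))
      · have hb : b = x := congrArg Prod.fst hbc
        have hc : c = y := congrArg Prod.snd hbc
        subst hb; subst hc
        exact Or.inl (hpar a hab)
      · have ha : a = x := congrArg Prod.fst hab
        have hb : b = y := congrArg Prod.snd hab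
        subst ha; subst hb
        exact Or.inl (hchild c hbc)
      · exfalso
        have hb1 : b = y := congrArg Prod.snd hab
        have hb2 : b = x := congrArg Prod.fst hbc
        have hxy : x = y := hb2 ▸ hb1
        exact hdag x (Relation.TransGen.single (Or.inr (by rw [← hxy])))
    refine ⟨hdag, ?_, ?_⟩
    · intro u v h
      induction h with
      | single h => exact h
      | tail h1 h2 ih => exact comp _ _ _ ih h2
    · intro u hu v hv hne hlab
      have hmem : ∀ w, w ∈ (G.addEdge (x, y)).nodes → w ∈ G.nodes := by
        intro w hw
        rcases Finset.mem_union.mp hw with h | h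
        · exact h
        · rcases Finset.mem_insert.mp h with rfl | h
          · exact hx
          · have : w = y := Finset.mem_singleton.mp h
            subst this; exact hy
      have hu' := hmem u hu
      have hv' := hmem v hv
      rcases hG.2.2 u hu' v hv' hne hlab with h | h
      · exact Or.inl (Relation.TransGen.mono (fun _ _ h => Or.inl h) _ _ h)
      · exact Or.inr (Relation.TransGen.mono (fun _ _ h => Or.inl h) _ _ h)
end

section
/- Let H be a strict, transitively closed episode with N + 1 edges that has at least one proper skeleton edge. Then either (Case A) there exist strict transitively closed episodes G_1 and G_2 with nodes identical to those of H such that G_1 and G_2 share N − 1 edges, e_1 = last(G_1) is not an edge of G_2, and the unique edge e_2 ∈ E(G_2) ∖ E(G_1) satisfies e_2 > e_1 and H = G_1 + e_2; or (Case B) for the episode G = H − last(H) (which is strict and transitively closed), last(G) is no longer a skeleton edge in H. -/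
open scoped Classical

section Aux
open Episode

variable {α : Type*}

lemma edgeLT_asymm {e f : ℕ × ℕ} (h1 : edgeLT e f) (h2 : edgeLT f e) : False := by
  rcases h1 with h | ⟨h, h'⟩ <;> rcases h2 with g | ⟨g, g'⟩ <;> omega

lemma edgeLT_total {e f : ℕ × ℕ} (h : e ≠ f) : edgeLT e f ∨ edgeLT f e := by
  rcases e with ⟨a, b⟩; rcases f with ⟨c, d⟩
  simp only [edgeLT]
  by_contra hc
  push_neg at hc
  exact h (by simp at hc ⊢; omega)

lemma edgeSet_eraseEdge (G : Episode α) (e : ℕ × ℕ) :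
    edgeSet (G.eraseEdge e) = edgeSet G \ {e} := by
  ext ⟨x, y⟩
  simp [edgeSet, eraseEdge, Set.mem_diff]

/-- Removing a proper skeleton edge from an episode in `𝒮` stays in `𝒮`. -/
lemma inS_eraseEdge {H : Episode α} (hH : inS H) {e : ℕ × ℕ}
    (he : IsProperSkeletonEdge H e) : inS (H.eraseEdge e) := by
  obtain ⟨hac, htc, hst⟩ := hH
  obtain ⟨⟨hedge, hskel⟩, hlab⟩ := he
  have hmono : ∀ {u v}, Relation.TransGen (H.eraseEdge e).edge u v →
      Relation.TransGen H.edge u v := fun h =>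
    Relation.TransGen.mono (fun _ _ h => h.1) _ _ h
  refine ⟨fun v hv => hac v (hmono hv), ?_, ?_⟩
  · -- trans closed
    intro u v huv
    refine ⟨htc (hmono huv), ?_⟩
    intro hne
    -- (u,v) = e; derive two-step path contradiction
    rcases Relation.TransGen.tail'_iff.mp huv with ⟨w, hw1, hw2⟩
    cases hw1 with
    | refl => exact hw2.2 hne
    | tail hub hbw =>
      have hub' : H.edge u w :=
        htc (Relation.TransGen.tail' (Relation.ReflTransGen.mono (fun _ _ h => h.1) _ _ hub) hbw.1)
      refine hskel ⟨w, ?_, ?_⟩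
      · rw [show u = e.1 from congrArg Prod.fst hne] at hub'; exact hub'
      · rw [show v = e.2 from congrArg Prod.snd hne] at hw2; exact hw2.1
  · -- strict
    intro u hu v hv hne hl
    simp only [eraseEdge] at hu hv
    rcases hst u hu v hv hne hl with h | h
    · left
      refine Relation.TransGen.single ⟨htc h, ?_⟩
      intro hq
      apply hlab
      rw [← show u = e.1 from congrArg Prod.fst hq, ← show v = e.2 from congrArg Prod.snd hq]
      exact hl
    · right
      refine Relation.TransGen.single ⟨htc h, ?_⟩
      intro hq
      apply hlab
      rw [← show v = e.1 from congrArg Prod.fst hq, ← show u = e.2 from congrArg Prod.snd hq]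
      exact hl.symm

/-- A nonempty finite family of proper skeleton edges has a last element. -/
lemma exists_lastEdge {G : Episode α} (hfin : (edgeSet G).Finite)
    (hne : ∃ e, IsProperSkeletonEdge G e) : ∃ e, IsLastEdge G e := by
  classical
  have hsub : {e | IsProperSkeletonEdge G e} ⊆ edgeSet G := fun e he => he.1.1
  have hSfin : {e | IsProperSkeletonEdge G e}.Finite := hfin.subset hsub
  obtain ⟨e, heS, hmax⟩ := Set.Finite.exists_maximalFor
    (fun p : ℕ × ℕ => (toLex p : ℕ ×ₗ ℕ)) _ hSfin hne
  refine ⟨e, heS, fun f hf => ?_⟩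
  by_cases hef : f = e
  · exact Or.inl hef
  · right
    rcases edgeLT_total hef with h | h
    · exact h
    · exfalso
      have hlt : (toLex e : ℕ ×ₗ ℕ) < toLex f := Prod.Lex.lt_iff.mpr h
      exact absurd (hmax hf hlt.le) (not_le.mpr hlt)
end Aux

open Episode in
/-- Candidate generation: a strict transitively closed episode `H` with `N+1`
edges that has a proper skeleton edge arises either (Case A) as `H = G₁ + e₂`
from two episodes `G₁, G₂ ∈ 𝒮` with nodes identical to `H` sharing `N − 1`
edges, with `e₁ = last(G₁) ∉ E(G₂)` and `e₂` the unique edge of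
`E(G₂) ∖ E(G₁)` satisfying `e₂ > e₁`, or (Case B) for `G = H − last(H)`
(which lies in `𝒮`), `last(G)` is no longer a skeleton edge in `H`. -/
theorem stmt12 {α : Type*} [LinearOrder α] (H : Episode α) (hH : inS H)
    (hci : CanonicallyIndexed H) (N : ℕ)
    (hcard : (edgeSet H).ncard = N + 1)
    (hskel : ∃ e, IsProperSkeletonEdge H e) :
    (∃ G₁ G₂ : Episode α, inS G₁ ∧ inS G₂ ∧
      G₁.nodes = H.nodes ∧ G₂.nodes = H.nodes ∧
      (∀ v ∈ H.nodes, G₁.lab v = H.lab v) ∧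
      (∀ v ∈ H.nodes, G₂.lab v = H.lab v) ∧
      (edgeSet G₁ ∩ edgeSet G₂).ncard = N - 1 ∧
      ∃ e₁ e₂ : ℕ × ℕ, IsLastEdge G₁ e₁ ∧ e₁ ∉ edgeSet G₂ ∧
        edgeSet G₂ \ edgeSet G₁ = {e₂} ∧ edgeLT e₁ e₂ ∧
        edgeSet H = edgeSet G₁ ∪ {e₂}) ∨
    (∃ e, IsLastEdge H e ∧ inS (H.eraseEdge e) ∧
      ∀ e', IsLastEdge (H.eraseEdge e) e' → ¬ IsSkeletonEdge H e') := by
  classical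
  have hfin : (edgeSet H).Finite := by
    rcases (edgeSet H).finite_or_infinite with h | h
    · exact h
    · rw [h.ncard] at hcard; omega
  obtain ⟨e₂, he₂⟩ := exists_lastEdge hfin hskel
  have hG : inS (H.eraseEdge e₂) := inS_eraseEdge hH he₂.1
  set G : Episode α := H.eraseEdge e₂ with hGdef
  have hGedges : edgeSet G = edgeSet H \ {e₂} := edgeSet_eraseEdge H e₂
  by_cases hex : ∃ e₁, IsLastEdge G e₁
  · obtain ⟨e₁, he₁⟩ := hex
    -- e₁ is an edge of G, hence of H, and e₁ ≠ e₂
    have he₁G : e₁ ∈ edgeSet G := he₁.1.1.1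
    have he₁H : e₁ ∈ edgeSet H := (hGedges ▸ he₁G).1
    have he₁ne : e₁ ≠ e₂ := by
      have := (hGedges ▸ he₁G).2
      simpa using this
    have he₂H : e₂ ∈ edgeSet H := he₂.1.1.1
    by_cases hsk : IsSkeletonEdge H e₁
    · -- Case A
      left
      have he₁psk : IsProperSkeletonEdge H e₁ := ⟨hsk, he₁.1.2⟩
      have hG₂ : inS (H.eraseEdge e₁) := inS_eraseEdge hH he₁psk
      have hG₂edges : edgeSet (H.eraseEdge e₁) = edgeSet H \ {e₁} :=
        edgeSet_eraseEdge H e₁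
      refine ⟨G, H.eraseEdge e₁, hG, hG₂, rfl, rfl, fun v _ => rfl, fun v _ => rfl, ?_,
        e₁, e₂, he₁, ?_, ?_, ?_, ?_⟩
      · -- intersection cardinality
        have hinter : edgeSet G ∩ edgeSet (H.eraseEdge e₁)
            = edgeSet H \ {e₁, e₂} := by
          rw [hGedges, hG₂edges]
          ext p
          simp only [Set.mem_inter_iff, Set.mem_diff, Set.mem_singleton_iff,
            Set.mem_insert_iff]
          tauto
        rw [hinter, Set.ncard_diff (by
          intro p hp
          simp only [Set.mem_insert_iff, Set.mem_singleton_iff] at hp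
          rcases hp with rfl | rfl
          · exact he₁H
          · exact he₂H), hcard]
        rw [Set.ncard_pair he₁ne]
        omega
      · rw [hG₂edges]
        simp
      · rw [hGedges, hG₂edges]
        ext p
        simp only [Set.mem_diff, Set.mem_singleton_iff]
        constructor
        · rintro ⟨⟨hpH, hpne₁⟩, hp⟩
          by_contra hpe₂
          exact hp ⟨hpH, hpe₂⟩
        · rintro rfl
          exact ⟨⟨he₂H, (Ne.symm he₁ne)⟩, fun h => h.2 rfl⟩
      · rcases he₂.2 e₁ he₁psk with rfl | h
        · exact absurd rfl he₁ne
        · exact h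
      · rw [hGedges]
        ext p
        simp only [Set.mem_union, Set.mem_diff, Set.mem_singleton_iff]
        constructor
        · intro hp
          by_cases hpe : p = e₂
          · exact Or.inr hpe
          · exact Or.inl ⟨hp, hpe⟩
        · rintro (⟨hp, -⟩ | rfl)
          · exact hp
          · exact he₂H
    · -- Case B: last(G) = e₁ is not a skeleton edge of H
      right
      refine ⟨e₂, he₂, hG, fun e' he' => ?_⟩
      have : e' = e₁ := by
        rcases he₁.2 e' he'.1 with h | h
        · exact h
        · rcases he'.2 e₁ he₁.1 with h' | h'
          · exact h'.symm
          · exact absurd h (fun h => edgeLT_asymm h h')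
      rwa [this]
  · -- no last edge of G at all: Case B vacuously
    right
    exact ⟨e₂, he₂, hG, fun e' he' => absurd ⟨e', he'⟩ hex⟩
end

section
/- Let G_1 and G_2 be strict, transitively closed episodes with identical nodes and N edges each, sharing N − 1 mutual edges. Let e_1 = (x_1, y_1) be the unique edge in E(G_1) ∖ E(G_2) and e_2 = (x_2, y_2) the unique edge in E(G_2) ∖ E(G_1), and let H = G_1 + e_2. Assume H has no cycles. Then H is strict and transitively closed if and only if one of the following holds: (1) x_1 ≠ y_2 and x_2 ≠ y_1; (2) x_1 ≠ y_2, x_2 = y_1, and (x_1, y_2) ∈ E(G_1); (3) x_1 = y_2, x_2 ≠ y_1, and (x_2, y_1) ∈ E(G_1). Moreover, if H is strict and transitively closed, then e_1 and e_2 are both skeleton edges in H. -/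
open scoped Classical

open Episode in
/-- Joining two episodes.  Let `G₁, G₂ ∈ 𝒮` have identical nodes and `N` edges
each, sharing `N − 1` edges, with unique edges `e₁ = (x₁,y₁) ∈ E(G₁) ∖ E(G₂)`
and `e₂ = (x₂,y₂) ∈ E(G₂) ∖ E(G₁)`, and let `H = G₁ + e₂` have no cycles.
Then `H ∈ 𝒮` iff one of the three stated conditions holds, and if `H ∈ 𝒮`
then `e₁` and `e₂` are skeleton edges of `H`. -/
theorem stmt13 {α : Type*} (G₁ G₂ : Episode α) (hG₁ : inS G₁) (hG₂ : inS G₂)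
    (hnodes : G₁.nodes = G₂.nodes)
    (hlab : ∀ v ∈ G₁.nodes, G₁.lab v = G₂.lab v)
    (N : ℕ) (hc₁ : (edgeSet G₁).ncard = N) (hc₂ : (edgeSet G₂).ncard = N)
    (hshare : (edgeSet G₁ ∩ edgeSet G₂).ncard = N - 1)
    (x₁ y₁ x₂ y₂ : ℕ)
    (he₁ : edgeSet G₁ \ edgeSet G₂ = {(x₁, y₁)})
    (he₂ : edgeSet G₂ \ edgeSet G₁ = {(x₂, y₂)})
    (hacyc : (G₁.addEdge (x₂, y₂)).Acyclic) :
    (inS (G₁.addEdge (x₂, y₂)) ↔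
      ((x₁ ≠ y₂ ∧ x₂ ≠ y₁) ∨
       (x₁ ≠ y₂ ∧ x₂ = y₁ ∧ G₁.edge x₁ y₂) ∨
       (x₁ = y₂ ∧ x₂ ≠ y₁ ∧ G₁.edge x₂ y₁))) ∧
    (inS (G₁.addEdge (x₂, y₂)) →
      IsSkeletonEdge (G₁.addEdge (x₂, y₂)) (x₁, y₁) ∧
      IsSkeletonEdge (G₁.addEdge (x₂, y₂)) (x₂, y₂)) := by
  classical
  have m1 : ((x₁, y₁) : ℕ × ℕ) ∈ edgeSet G₁ \ edgeSet G₂ := by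
    rw [he₁]; exact Set.mem_singleton _
  have m2 : ((x₂, y₂) : ℕ × ℕ) ∈ edgeSet G₂ \ edgeSet G₁ := by
    rw [he₂]; exact Set.mem_singleton _
  have e1G1 : G₁.edge x₁ y₁ := m1.1
  have e1n2 : ¬ G₂.edge x₁ y₁ := m1.2
  have e2G2 : G₂.edge x₂ y₂ := m2.1
  have e2n1 : ¬ G₁.edge x₂ y₂ := m2.2
  have hsub₁ : ∀ a b, G₁.edge a b → ((a, b) : ℕ × ℕ) ≠ (x₁, y₁) → G₂.edge a b := by
    intro a b h hne
    by_contra h2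
    refine hne ?_
    have hmem : ((a, b) : ℕ × ℕ) ∈ edgeSet G₁ \ edgeSet G₂ := ⟨h, h2⟩
    rwa [he₁, Set.mem_singleton_iff] at hmem
  have hsub₂ : ∀ a b, G₂.edge a b → ((a, b) : ℕ × ℕ) ≠ (x₂, y₂) → G₁.edge a b := by
    intro a b h hne
    by_contra h2
    refine hne ?_
    have hmem : ((a, b) : ℕ × ℕ) ∈ edgeSet G₂ \ edgeSet G₁ := ⟨h, h2⟩
    rwa [he₂, Set.mem_singleton_iff] at hmem
  have liftG₂ : ∀ a b, G₂.edge a b → (G₁.addEdge (x₂, y₂)).edge a b := by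
    intro a b h
    by_cases h' : ((a, b) : ℕ × ℕ) = (x₂, y₂)
    · exact Or.inr h'
    · exact Or.inl (hsub₂ a b h h')
  have HedgeAlt : ∀ a b, (G₁.addEdge (x₂, y₂)).edge a b ↔
      (G₂.edge a b ∨ ((a, b) : ℕ × ℕ) = (x₁, y₁)) := by
    intro a b
    constructor
    · rintro (h | h)
      · by_cases h' : ((a, b) : ℕ × ℕ) = (x₁, y₁)
        · exact Or.inr h'
        · exact Or.inl (hsub₁ a b h h')
      · rw [Prod.mk.injEq] at h
        rw [h.1, h.2]; exact Or.inl e2G2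
    · rintro (h | h)
      · exact liftG₂ a b h
      · rw [Prod.mk.injEq] at h
        exact Or.inl (by rw [h.1, h.2]; exact e1G1)
  have hne₁ : x₁ ≠ y₁ := by
    intro h
    exact hG₁.1 x₁ (Relation.TransGen.single (show G₁.edge x₁ x₁ by rw [h] at e1G1 ⊢; exact e1G1))
  have hne₂ : x₂ ≠ y₂ := by
    intro h
    refine hacyc x₂ (Relation.TransGen.single (Or.inr ?_))
    rw [Prod.mk.injEq]; exact ⟨rfl, h⟩
  have notboth : ¬ (x₁ = y₂ ∧ x₂ = y₁) := by
    rintro ⟨h12, h21⟩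
    refine hacyc x₂ (Relation.TransGen.head (Or.inr rfl)
      (Relation.TransGen.single (Or.inl ?_)))
    rw [← h12, h21]
    exact e1G1
  have memH : ∀ z, z ∈ (G₁.addEdge (x₂, y₂)).nodes → z ∈ G₁.nodes := by
    intro z hz
    have hx : x₂ ∈ G₁.nodes := by rw [hnodes]; exact (G₂.edge_mem e2G2).1
    have hy : y₂ ∈ G₁.nodes := by rw [hnodes]; exact (G₂.edge_mem e2G2).2
    rcases Finset.mem_union.mp hz with h | h
    · exact h
    · rcases Finset.mem_insert.mp h with rfl | h
      · exact hx
      · rw [Finset.mem_singleton] at h; rw [h]; exact hy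
  have hstrictH : (G₁.addEdge (x₂, y₂)).Strict := by
    intro u hu v hv hneq hl
    rcases hG₁.2.2 u (memH u hu) v (memH v hv) hneq hl with h | h
    · exact Or.inl (Relation.TransGen.mono (p := (G₁.addEdge (x₂, y₂)).edge) (fun a b hab => Or.inl hab) u v h)
    · exact Or.inr (Relation.TransGen.mono (p := (G₁.addEdge (x₂, y₂)).edge) (fun a b hab => Or.inl hab) v u h)
  have htransCore :
      ((x₁ ≠ y₂ ∧ x₂ ≠ y₁) ∨ (x₁ ≠ y₂ ∧ x₂ = y₁ ∧ G₁.edge x₁ y₂) ∨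
        (x₁ = y₂ ∧ x₂ ≠ y₁ ∧ G₁.edge x₂ y₁)) →
      ∀ u v w, (G₁.addEdge (x₂, y₂)).edge u v → (G₁.addEdge (x₂, y₂)).edge v w →
        (G₁.addEdge (x₂, y₂)).edge u w := by
    intro hcond u v w huv hvw
    rcases huv with h1 | h1
    · rcases hvw with h2 | h2
      · exact Or.inl (hG₁.2.1 ((Relation.TransGen.single h1).trans
          (Relation.TransGen.single h2)))
      · have hv : v = x₂ := congrArg Prod.fst h2
        have hw : w = y₂ := congrArg Prod.snd h2
        by_cases hE : ((u, v) : ℕ × ℕ) = (x₁, y₁)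
        · have hu : u = x₁ := congrArg Prod.fst hE
          have hv' : v = y₁ := congrArg Prod.snd hE
          have h21 : x₂ = y₁ := hv.symm.trans hv'
          rcases hcond with ⟨-, hne⟩ | ⟨-, -, hE1⟩ | ⟨-, hne, -⟩
          · exact absurd h21 hne
          · refine Or.inl ?_
            rw [hu, hw]; exact hE1
          · exact absurd h21 hne
        · have g : G₂.edge u v := hsub₁ _ _ h1 hE
          have g2 : G₂.edge u y₂ := hG₂.2.1 (Relation.TransGen.head g
            (Relation.TransGen.single (show G₂.edge v y₂ by rw [hv]; exact e2G2)))
          rw [hw]; exact liftG₂ _ _ g2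
    · rcases hvw with h2 | h2
      · have hu : u = x₂ := congrArg Prod.fst h1
        have hv : v = y₂ := congrArg Prod.snd h1
        by_cases hE : ((v, w) : ℕ × ℕ) = (x₁, y₁)
        · have hv' : v = x₁ := congrArg Prod.fst hE
          have hw : w = y₁ := congrArg Prod.snd hE
          have h12 : x₁ = y₂ := hv'.symm.trans hv
          rcases hcond with ⟨hne, -⟩ | ⟨hne, -, -⟩ | ⟨-, -, hE1⟩
          · exact absurd h12 hne
          · exact absurd h12 hne
          · refine Or.inl ?_
            rw [hu, hw]; exact hE1
        · have g : G₂.edge v w := hsub₁ _ _ h2 hE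
          have g2 : G₂.edge x₂ w := hG₂.2.1 (Relation.TransGen.head
            (show G₂.edge x₂ v by rw [hv]; exact e2G2) (Relation.TransGen.single g))
          rw [hu]; exact liftG₂ _ _ g2
      · exact absurd ((congrArg Prod.fst h2).symm.trans (congrArg Prod.snd h1)) hne₂
  constructor
  · constructor
    · intro hS
      by_cases h12 : x₁ = y₂
      · by_cases h21 : x₂ = y₁
        · exact absurd ⟨h12, h21⟩ notboth
        · refine Or.inr (Or.inr ⟨h12, h21, ?_⟩)
          have hedge : (G₁.addEdge (x₂, y₂)).edge x₂ y₁ :=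
            hS.2.1 (Relation.TransGen.head (Or.inr rfl)
              (Relation.TransGen.single (Or.inl (show G₁.edge y₂ y₁ by
                rw [← h12]; exact e1G1))))
          rcases hedge with h | h
          · exact h
          · exact absurd (h12.trans ((congrArg Prod.snd h)).symm) hne₁
      · by_cases h21 : x₂ = y₁
        · refine Or.inr (Or.inl ⟨h12, h21, ?_⟩)
          have hedge : (G₁.addEdge (x₂, y₂)).edge x₁ y₂ :=
            hS.2.1 (Relation.TransGen.head (Or.inl e1G1)
              (Relation.TransGen.single (Or.inr (by rw [Prod.mk.injEq]; exact ⟨h21.symm, rfl⟩))))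
          rcases hedge with h | h
          · exact h
          · exact absurd ((congrArg Prod.fst h).trans h21) hne₁
        · exact Or.inl ⟨h12, h21⟩
    · intro hcond
      refine ⟨hacyc, ?_, hstrictH⟩
      intro u v h
      induction h with
      | single h' => exact h'
      | tail _ h' ih => exact htransCore hcond _ _ _ ih h'
  · intro hS
    constructor
    · refine ⟨Or.inl e1G1, ?_⟩
      rintro ⟨u, hu1, hu2⟩
      rcases (HedgeAlt x₁ u).mp hu1 with g1 | g1
      · rcases (HedgeAlt u y₁).mp hu2 with g2 | g2
        · exact e1n2 (hG₂.2.1 (Relation.TransGen.head g1 (Relation.TransGen.single g2)))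
        · have hux : u = x₁ := congrArg Prod.fst g2
          rw [hux] at hu1
          exact hacyc x₁ (Relation.TransGen.single hu1)
      · have huy : u = y₁ := congrArg Prod.snd g1
        rw [huy] at hu2
        exact hacyc y₁ (Relation.TransGen.single hu2)
    · refine ⟨Or.inr rfl, ?_⟩
      rintro ⟨u, hu1, hu2⟩
      rcases hu1 with g1 | g1
      · rcases hu2 with g2 | g2
        · exact e2n1 (hG₁.2.1 (Relation.TransGen.head g1 (Relation.TransGen.single g2)))
        · have hux : u = x₂ := congrArg Prod.fst g2
          rw [hux] at g1
          exact hG₁.1 x₂ (Relation.TransGen.single g1)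
      · have huy : u = y₂ := congrArg Prod.snd g1
        rw [huy] at hu2
        exact hacyc y₂ (Relation.TransGen.single hu2)
end

section
/- Let G be a strict, transitively closed episode, let e_1 = (x_1, y_1) be a skeleton edge of G, let e_2 = (x_2, y_2) be an edge not in E(G), and define H = G + e_2. Assume H is strict and transitively closed and that e_1 is not a skeleton edge in H. Then either y_2 = y_1 and (x_1, x_2) is a skeleton edge in G, or x_1 = x_2 and (y_2, y_1) is a skeleton edge in G. -/
open scoped Classical

open Episode in
/-- Let `G ∈ 𝒮`, let `e₁ = (x₁,y₁)` be a skeleton edge of `G` and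
`e₂ = (x₂,y₂)` an edge not in `E(G)`, and let `H = G + e₂`.  If `H ∈ 𝒮` and
`e₁` is not a skeleton edge of `H`, then either `y₂ = y₁` and `(x₁,x₂)` is a
skeleton edge of `G`, or `x₁ = x₂` and `(y₂,y₁)` is a skeleton edge of `G`. -/
theorem stmt14 {α : Type*} (G : Episode α) (hG : inS G) (x₁ y₁ x₂ y₂ : ℕ)
    (h₁ : IsSkeletonEdge G (x₁, y₁))
    (hx₂ : x₂ ∈ G.nodes) (hy₂ : y₂ ∈ G.nodes) (h₂ : ¬ G.edge x₂ y₂)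
    (hH : inS (G.addEdge (x₂, y₂)))
    (hns : ¬ IsSkeletonEdge (G.addEdge (x₂, y₂)) (x₁, y₁)) :
    (y₂ = y₁ ∧ IsSkeletonEdge G (x₁, x₂)) ∨
    (x₁ = x₂ ∧ IsSkeletonEdge G (y₂, y₁)) := by
  obtain ⟨hGacyc, hGtc, -⟩ := hG
  obtain ⟨hHacyc, hHtc, -⟩ := hH
  obtain ⟨he₁, hsk⟩ := h₁
  have hedgeH : (G.addEdge (x₂, y₂)).edge x₁ y₁ := Or.inl he₁
  have hu : ∃ u, (G.addEdge (x₂, y₂)).edge x₁ u ∧ (G.addEdge (x₂, y₂)).edge u y₁ := by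
    by_contra h
    exact hns ⟨hedgeH, h⟩
  obtain ⟨u, hu1, hu2⟩ := hu
  rcases hu1 with h1 | h1
  · rcases hu2 with h2 | h2
    · exact absurd ⟨u, h1, h2⟩ hsk
    · -- (u, y₁) = (x₂, y₂): u = x₂, y₁ = y₂
      injection h2 with e1 e2; subst e1; subst e2
      left
      refine ⟨rfl, h1, ?_⟩
      rintro ⟨w, hw1, hw2⟩
      -- H trans closed: w → u → y₂ gives H.edge w y₂
      have hHwy : (G.addEdge (u, y₁)).edge w y₁ :=
        hHtc ((Relation.TransGen.single
            (show (G.addEdge (u, y₁)).edge w u from Or.inl hw2)).trans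
          (Relation.TransGen.single
            (show (G.addEdge (u, y₁)).edge u y₁ from Or.inr rfl)))
      rcases hHwy with hG' | hG'
      · exact hsk ⟨w, hw1, hG'⟩
      · injection hG' with e1 e2; subst e1
        exact hGacyc w (Relation.TransGen.single hw2)
  · -- (x₁, u) = (x₂, y₂): x₁ = x₂, u = y₂
    injection h1 with e1 e2; subst e1; subst e2
    rcases hu2 with h2 | h2
    · right
      refine ⟨rfl, h2, ?_⟩
      rintro ⟨w, hw1, hw2⟩
      -- H trans closed: x₁ → u → w gives H.edge x₁ w
      have hHxw : (G.addEdge (x₁, u)).edge x₁ w :=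
        hHtc ((Relation.TransGen.single
            (show (G.addEdge (x₁, u)).edge x₁ u from Or.inr rfl)).trans
          (Relation.TransGen.single
            (show (G.addEdge (x₁, u)).edge u w from Or.inl hw1)))
      rcases hHxw with hG' | hG'
      · exact hsk ⟨w, hG', hw2⟩
      · injection hG' with e1 e2; subst e2
        exact hGacyc w (Relation.TransGen.single hw1)
    · -- (u, y₁) = (x₁, u): u = x₁ and y₁ = u
      injection h2 with e1 e2; subst e1; subst e2
      exact absurd he₁ h₂
end

section
/- Let G be a strict, transitively closed episode and let e be a proper skeleton edge of G. Let H = G − e (which is strict and transitively closed). Then there exists no strict, transitively closed episode H_1 with H ≺ H_1 ≺ G. -/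
open scoped Classical

namespace Episode

variable {α : Type*}

section AuxStmt15
open Episode Relation
variable {α : Type*}

private lemma aux_exists_source (V : Finset ℕ) (hV : V.Nonempty) (R : ℕ → ℕ → Prop)
    (hmem : ∀ x y, R x y → x ∈ V ∧ y ∈ V)
    (hacyc : ∀ v, ¬ TransGen R v v) :
    ∃ v ∈ V, ∀ u, ¬ R u v := by
  classical
  obtain ⟨v, hv, hmin⟩ := V.exists_min_image
      (fun v => (V.filter (fun u => TransGen R u v)).card) hV
  refine ⟨v, hv, fun u hu => ?_⟩
  have huV : u ∈ V := (hmem _ _ hu).1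
  have hsub : V.filter (fun w => TransGen R w u) ⊆ V.filter (fun w => TransGen R w v) := by
    intro w hw
    rw [Finset.mem_filter] at hw ⊢
    exact ⟨hw.1, hw.2.tail hu⟩
  have hss : V.filter (fun w => TransGen R w u) ⊂ V.filter (fun w => TransGen R w v) := by
    rw [Finset.ssubset_iff_of_subset hsub]
    exact ⟨u, Finset.mem_filter.mpr ⟨huV, TransGen.single hu⟩,
      fun hc => hacyc u (Finset.mem_filter.mp hc).2⟩
  have h1 := hmin u huV
  have h2 := Finset.card_lt_card hss
  omega

private lemma aux_exists_topo_n : ∀ (n : ℕ) (V : Finset ℕ), V.card = n →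
    ∀ (R : ℕ → ℕ → Prop), (∀ x y, R x y → x ∈ V ∧ y ∈ V) →
    (∀ v, ¬ TransGen R v v) →
    ∃ l : List ℕ, l.Nodup ∧ (∀ x, x ∈ l ↔ x ∈ V) ∧
      ∀ u v, R u v → l.idxOf u < l.idxOf v := by
  intro n
  induction n with
  | zero =>
    intro V hV R hmem hacyc
    have hVe : V = ∅ := Finset.card_eq_zero.mp hV
    refine ⟨[], by simp, by simp [hVe], fun u v h => absurd ((hmem u v h).1) (by simp [hVe])⟩
  | succ n ih =>
    intro V hV R hmem hacyc
    have hne : V.Nonempty := Finset.card_pos.mp (by omega)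
    obtain ⟨v₀, hv₀, hsrc⟩ := aux_exists_source V hne R hmem hacyc
    have hmem' : ∀ x y, (fun x y => R x y ∧ x ≠ v₀) x y → x ∈ V.erase v₀ ∧ y ∈ V.erase v₀ := by
      rintro x y ⟨h, hx⟩
      have hy : y ≠ v₀ := fun hyv => hsrc x (hyv ▸ h)
      exact ⟨Finset.mem_erase.mpr ⟨hx, (hmem _ _ h).1⟩,
        Finset.mem_erase.mpr ⟨hy, (hmem _ _ h).2⟩⟩
    have hacyc' : ∀ v, ¬ TransGen (fun x y => R x y ∧ x ≠ v₀) v v := fun v h =>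
      hacyc v (TransGen.mono (fun a b (hab : R a b ∧ a ≠ v₀) => hab.1) _ _ h)
    have hcard' : (V.erase v₀).card = n := by
      rw [Finset.card_erase_of_mem hv₀, hV]
      omega
    obtain ⟨l', hnd', hiff', hord'⟩ := ih (V.erase v₀) hcard' _ hmem' hacyc'
    refine ⟨v₀ :: l', ?_, ?_, ?_⟩
    · exact List.nodup_cons.mpr
        ⟨fun h => (Finset.mem_erase.mp ((hiff' v₀).1 h)).1 rfl, hnd'⟩
    · intro x
      simp only [List.mem_cons, hiff' x, Finset.mem_erase]
      constructor
      · rintro (rfl | ⟨-, h⟩)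
        · exact hv₀
        · exact h
      · intro h
        by_cases hx : x = v₀
        · exact Or.inl hx
        · exact Or.inr ⟨hx, h⟩
    · intro u v h
      have hvne : v ≠ v₀ := fun hv => hsrc u (hv ▸ h)
      by_cases hu : u = v₀
      · subst hu
        rw [List.idxOf_cons_self, List.idxOf_cons_ne _ (Ne.symm hvne)]
        omega
      · rw [List.idxOf_cons_ne _ (Ne.symm hu), List.idxOf_cons_ne _ (Ne.symm hvne)]
        have := hord' u v ⟨h, hu⟩
        omega

private lemma aux_exists_topo (V : Finset ℕ) (R : ℕ → ℕ → Prop)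
    (hmem : ∀ x y, R x y → x ∈ V ∧ y ∈ V)
    (hacyc : ∀ v, ¬ TransGen R v v) :
    ∃ l : List ℕ, l.Nodup ∧ (∀ x, x ∈ l ↔ x ∈ V) ∧
      ∀ u v, R u v → l.idxOf u < l.idxOf v :=
  aux_exists_topo_n V.card V rfl R hmem hacyc

private lemma aux_topo_cover {B : Episode α} {l : List ℕ} (hnd : l.Nodup)
    (hmemiff : ∀ x, x ∈ l ↔ x ∈ B.nodes)
    (hord : ∀ u v, B.edge u v → l.idxOf u < l.idxOf v) :
    ∃ c : {v // v ∈ B.nodes} → Fin (l.map B.lab).length,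
      Function.Bijective c ∧ (∀ v, (l.map B.lab).get (c v) = B.lab v.1) ∧
      (∀ u v : {v // v ∈ B.nodes}, B.edge u.1 v.1 → c u < c v) ∧
      (∀ v, (c v : ℕ) = l.idxOf v.1) ∧ (l.map B.lab).length = B.nodes.card := by
  classical
  have hlen : l.length = B.nodes.card := by
    rw [← List.toFinset_card_of_nodup hnd]
    congr 1
    ext x
    simp [hmemiff]
  have hmem : ∀ v : {v // v ∈ B.nodes}, l.idxOf v.1 < (l.map B.lab).length := by
    intro v
    rw [List.length_map]
    exact List.idxOf_lt_length_iff.mpr ((hmemiff _).mpr v.2)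
  refine ⟨fun v => ⟨l.idxOf v.1, hmem v⟩, ?_, ?_, ?_, fun v => rfl, by
    rw [List.length_map]; exact hlen⟩
  · apply (Fintype.bijective_iff_injective_and_card _).mpr
    constructor
    · intro u v huv
      apply Subtype.ext
      have hidx : l.idxOf u.1 = l.idxOf v.1 := congrArg Fin.val huv
      exact (List.idxOf_inj ((hmemiff _).mpr u.2)).mp hidx
    · simp [Fintype.card_coe, List.length_map, hlen]
  · intro v
    have hvmem : v.1 ∈ l := (hmemiff _).mpr v.2
    have h' : l.idxOf v.1 < l.length := List.idxOf_lt_length_iff.mpr hvmem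
    simp only [List.get_eq_getElem, List.getElem_map]
    rw [List.getElem_idxOf h']
  · intro u v h
    exact Fin.mk_lt_mk.mpr (hord u.1 v.1 h)

private lemma aux_cover_unique {A : Episode α} (hA : inS A) {s : List α}
    (hlen : s.length = A.nodes.card)
    {f g : {v // v ∈ A.nodes} → Fin s.length}
    (hf : Function.Injective f) (hfl : ∀ v, s.get (f v) = A.lab v.1)
    (hfe : ∀ u v, A.edge u.1 v.1 → A.lab u.1 = A.lab v.1 → f u < f v)
    (hg : Function.Injective g) (hgl : ∀ v, s.get (g v) = A.lab v.1)
    (hge : ∀ u v, A.edge u.1 v.1 → A.lab u.1 = A.lab v.1 → g u < g v) :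
    f = g := by
  classical
  have hcard : Fintype.card {v // v ∈ A.nodes} = Fintype.card (Fin s.length) := by
    simp [Fintype.card_coe, hlen]
  have hfb : Function.Bijective f := (Fintype.bijective_iff_injective_and_card f).mpr ⟨hf, hcard⟩
  have hgb : Function.Bijective g := (Fintype.bijective_iff_injective_and_card g).mpr ⟨hg, hcard⟩
  have hedge : ∀ u v : {v // v ∈ A.nodes}, u ≠ v → A.lab u.1 = A.lab v.1 →
      A.edge u.1 v.1 ∨ A.edge v.1 u.1 := by
    intro u v huv hl
    have hne : u.1 ≠ v.1 := fun h => huv (Subtype.ext h)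
    rcases hA.2.2 u.1 u.2 v.1 v.2 hne hl with h | h
    · exact Or.inl (hA.2.1 h)
    · exact Or.inr (hA.2.1 h)
  have key : ∀ (h : {v // v ∈ A.nodes} → Fin s.length), Function.Bijective h →
      (∀ v, s.get (h v) = A.lab v.1) →
      (∀ u v, A.edge u.1 v.1 → A.lab u.1 = A.lab v.1 → h u < h v) →
      ∀ v, (Finset.univ.filter
          (fun i : Fin s.length => s.get i = A.lab v.1 ∧ i < h v)).card =
        (Finset.univ.filter (fun w : {v // v ∈ A.nodes} =>
          A.lab w.1 = A.lab v.1 ∧ A.edge w.1 v.1)).card := by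
    intro h hb hl he v
    refine (Finset.card_bij (fun w _ => h w) ?_ ?_ ?_).symm
    · intro w hw
      simp only [Finset.mem_filter, Finset.mem_univ, true_and] at hw ⊢
      exact ⟨(hl w).trans hw.1, he w v hw.2 hw.1⟩
    · intro w1 h1 w2 h2 heq
      exact hb.1 heq
    · intro i hi
      simp only [Finset.mem_filter, Finset.mem_univ, true_and] at hi
      obtain ⟨w, rfl⟩ := hb.2 i
      refine ⟨w, ?_, rfl⟩
      simp only [Finset.mem_filter, Finset.mem_univ, true_and]
      have hlw : A.lab w.1 = A.lab v.1 := by rw [← hl w]; exact hi.1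
      have hwv : w ≠ v := by rintro rfl; exact lt_irrefl _ hi.2
      rcases hedge w v hwv hlw with hh | hh
      · exact ⟨hlw, hh⟩
      · exact absurd hi.2 (not_lt.mpr (he v w hh hlw.symm).le)
  funext v
  have hcc : (Finset.univ.filter
        (fun i : Fin s.length => s.get i = A.lab v.1 ∧ i < f v)).card =
      (Finset.univ.filter
        (fun i : Fin s.length => s.get i = A.lab v.1 ∧ i < g v)).card :=
    (key f hfb hfl hfe v).trans (key g hgb hgl hge v).symm
  have hmain : ∀ a b : Fin s.length, s.get a = A.lab v.1 → a < b →
      (Finset.univ.filter (fun i : Fin s.length => s.get i = A.lab v.1 ∧ i < a)).card <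
      (Finset.univ.filter (fun i : Fin s.length => s.get i = A.lab v.1 ∧ i < b)).card := by
    intro a b ha hab
    apply Finset.card_lt_card
    have hsub : (Finset.univ.filter (fun i : Fin s.length => s.get i = A.lab v.1 ∧ i < a)) ⊆
        (Finset.univ.filter (fun i : Fin s.length => s.get i = A.lab v.1 ∧ i < b)) := by
      intro i hi
      simp only [Finset.mem_filter, Finset.mem_univ, true_and] at hi ⊢
      exact ⟨hi.1, hi.2.trans hab⟩
    rw [Finset.ssubset_iff_of_subset hsub]
    refine ⟨a, ?_, ?_⟩
    · simp only [Finset.mem_filter, Finset.mem_univ, true_and]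
      exact ⟨ha, hab⟩
    · simp
  rcases lt_trichotomy (f v) (g v) with hlt | heq | hgt
  · exact absurd hcc (Nat.ne_of_lt (hmain (f v) (g v) (hfl v) hlt))
  · exact heq
  · exact absurd hcc.symm (Nat.ne_of_lt (hmain (g v) (f v) (hgl v) hgt))

private lemma aux_embed {A B : Episode α} (hA : inS A) (hB : inS B)
    (hcard : A.nodes.card = B.nodes.card)
    (himp : ∀ s : List α, Covers s B → Covers s A) :
    ∃ φ : {v // v ∈ A.nodes} → {v // v ∈ B.nodes},
      Function.Bijective φ ∧ (∀ v, B.lab (φ v).1 = A.lab v.1) ∧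
      ∀ u v, A.edge u.1 v.1 → B.edge (φ u).1 (φ v).1 := by
  classical
  obtain ⟨l₁, hnd₁, hiff₁, hord₁⟩ :=
    aux_exists_topo B.nodes B.edge (fun x y h => B.edge_mem h) hB.1
  obtain ⟨c₁, hc₁b, hc₁l, hc₁e, hc₁idx, hlen₁⟩ := aux_topo_cover hnd₁ hiff₁ hord₁
  have hcov₁ : Covers (l₁.map B.lab) B := ⟨c₁, hc₁b.1, hc₁l, hc₁e⟩
  obtain ⟨f₀, hf₀i, hf₀l, hf₀e⟩ := himp _ hcov₁
  have hcardA : Fintype.card {v // v ∈ A.nodes} =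
      Fintype.card (Fin (l₁.map B.lab).length) := by
    simp [Fintype.card_coe, hlen₁, hcard]
  have hf₀b : Function.Bijective f₀ :=
    (Fintype.bijective_iff_injective_and_card f₀).mpr ⟨hf₀i, hcardA⟩
  set e₁ : {v // v ∈ B.nodes} ≃ Fin (l₁.map B.lab).length := Equiv.ofBijective c₁ hc₁b with he₁
  set φ : {v // v ∈ A.nodes} → {v // v ∈ B.nodes} := fun v => e₁.symm (f₀ v) with hφ
  have hφc : ∀ v, c₁ (φ v) = f₀ v := fun v => e₁.apply_symm_apply (f₀ v)
  have hφb : Function.Bijective φ := e₁.symm.bijective.comp hf₀b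
  have hφl : ∀ v, B.lab (φ v).1 = A.lab v.1 := by
    intro v
    rw [← hc₁l (φ v), hφc v]
    exact hf₀l v
  have hφclass : ∀ u v, A.edge u.1 v.1 → A.lab u.1 = A.lab v.1 →
      B.edge (φ u).1 (φ v).1 := by
    intro u v he hl
    have huv : u ≠ v := by rintro rfl; exact hA.1 u.1 (TransGen.single he)
    have hne : (φ u).1 ≠ (φ v).1 := fun h => huv (hφb.1 (Subtype.ext h))
    have hlb : B.lab (φ u).1 = B.lab (φ v).1 := by rw [hφl u, hφl v, hl]
    rcases hB.2.2 _ (φ u).2 _ (φ v).2 hne hlb with h | h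
    · exact hB.2.1 h
    · exfalso
      have hc := hc₁e _ _ (hB.2.1 h)
      rw [hφc, hφc] at hc
      exact absurd (hf₀e u v he) (not_lt.mpr hc.le)
  refine ⟨φ, hφb, hφl, ?_⟩
  intro u v he
  by_contra hne
  have huv : u ≠ v := by rintro rfl; exact hA.1 u.1 (TransGen.single he)
  have hfne : (φ u).1 ≠ (φ v).1 := fun h => huv (hφb.1 (Subtype.ext h))
  have hkey : ∀ x y, TransGen (fun x y => B.edge x y ∨ (x = (φ v).1 ∧ y = (φ u).1)) x y →
      TransGen B.edge x y ∨
      (ReflTransGen B.edge x (φ v).1 ∧ ReflTransGen B.edge (φ u).1 y) := by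
    intro x y h
    induction h with
    | single hr =>
      rcases hr with hr | ⟨rfl, rfl⟩
      · exact Or.inl (TransGen.single hr)
      · exact Or.inr ⟨ReflTransGen.refl, ReflTransGen.refl⟩
    | tail hxb hr ih =>
      rcases hr with hr | ⟨rfl, rfl⟩
      · rcases ih with ih | ⟨h1, h2⟩
        · exact Or.inl (ih.tail hr)
        · exact Or.inr ⟨h1, h2.tail hr⟩
      · rcases ih with ih | ⟨h1, h2⟩
        · exact Or.inr ⟨ih.to_reflTransGen, ReflTransGen.refl⟩
        · exfalso
          rcases Relation.reflTransGen_iff_eq_or_transGen.mp h2 with heq | htr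
          · exact hfne heq.symm
          · exact hne (hB.2.1 htr)
  have hacyc₂ : ∀ w, ¬ TransGen (fun x y => B.edge x y ∨ (x = (φ v).1 ∧ y = (φ u).1)) w w := by
    intro w hw
    rcases hkey w w hw with h | ⟨h1, h2⟩
    · exact hB.1 w h
    · have hco : ReflTransGen B.edge (φ u).1 (φ v).1 := h2.trans h1
      rcases Relation.reflTransGen_iff_eq_or_transGen.mp hco with heq | htr
      · exact hfne heq.symm
      · exact hne (hB.2.1 htr)
  have hmem₂ : ∀ x y, (B.edge x y ∨ (x = (φ v).1 ∧ y = (φ u).1)) →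
      x ∈ B.nodes ∧ y ∈ B.nodes := by
    rintro x y (h | ⟨rfl, rfl⟩)
    · exact B.edge_mem h
    · exact ⟨(φ v).2, (φ u).2⟩
  obtain ⟨l₂, hnd₂, hiff₂, hord₂⟩ := aux_exists_topo B.nodes _ hmem₂ hacyc₂
  obtain ⟨c₂, hc₂b, hc₂l, hc₂e, hc₂idx, hlen₂⟩ :=
    aux_topo_cover hnd₂ hiff₂ (fun x y h => hord₂ x y (Or.inl h))
  have hcov₂ : Covers (l₂.map B.lab) B := ⟨c₂, hc₂b.1, hc₂l, hc₂e⟩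
  obtain ⟨f₂, hf₂i, hf₂l, hf₂e⟩ := himp _ hcov₂
  have heq : f₂ = fun w => c₂ (φ w) := by
    refine aux_cover_unique hA (hlen₂.trans hcard.symm) hf₂i hf₂l
      (fun u v h _ => hf₂e u v h) ?_ ?_ ?_
    · exact fun w1 w2 h => hφb.1 (hc₂b.1 h)
    · intro w
      rw [hc₂l (φ w)]
      exact hφl w
    · intro u' v' h hl
      exact hc₂e _ _ (hφclass u' v' h hl)
  have h2 := hord₂ (φ v).1 (φ u).1 (Or.inr ⟨rfl, rfl⟩)
  rw [← hc₂idx (φ v), ← hc₂idx (φ u)] at h2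
  have h3 := hf₂e u v he
  rw [heq] at h3
  simp only at h3
  exact absurd (Fin.lt_def.mp h3) (by omega)

private lemma aux_inS_erase {G : Episode α} (hG : inS G) {e : ℕ × ℕ}
    (he : IsProperSkeletonEdge G e) : inS (G.eraseEdge e) := by
  obtain ⟨hac, htc, hst⟩ := hG
  have hmono : ∀ {x y : ℕ}, TransGen (G.eraseEdge e).edge x y → TransGen G.edge x y :=
    fun h => TransGen.mono (fun a b (hab : (G.eraseEdge e).edge a b) => hab.1) _ _ h
  refine ⟨fun v hv => hac v (hmono hv), ?_, ?_⟩
  · intro u v h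
    cases h with
    | single h => exact h
    | tail hub hbv =>
      refine ⟨htc ((hmono hub).tail hbv.1), ?_⟩
      intro hev
      apply he.1.2
      have h1 : u = e.1 := by rw [← hev]
      have h2 : v = e.2 := by rw [← hev]
      subst h1; subst h2
      exact ⟨_, htc (hmono hub), hbv.1⟩
  · intro u hu v hv huv hl
    have hne1 : (u, v) ≠ e := by
      intro h
      exact he.2 (by rw [← h]; exact hl)
    have hne2 : (v, u) ≠ e := by
      intro h
      exact he.2 (by rw [← h]; exact hl.symm)
    rcases hst u hu v hv huv hl with h | h
    · exact Or.inl (TransGen.single ⟨htc h, hne1⟩)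
    · exact Or.inr (TransGen.single ⟨htc h, hne2⟩)

private lemma aux_covers_restrict_self (B : Episode α) (s : List α) :
    Covers s (B.restrict B.nodes) ↔ Covers s B := by
  constructor
  · rintro ⟨f, hfi, hfl, hfe⟩
    exact ⟨f, hfi, hfl, fun u v h => hfe u v ⟨u.2, v.2, h⟩⟩
  · rintro ⟨f, hfi, hfl, hfe⟩
    exact ⟨f, hfi, hfl, fun u v h => hfe u v h.2.2⟩

private lemma aux_card_le_of_subep {A B : Episode α} (h : Subep A B) :
    A.nodes.card ≤ B.nodes.card := by
  obtain ⟨U, hU, hcard, -⟩ := h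
  rw [← hcard]
  exact Finset.card_le_card hU

private lemma aux_imp_of_subep {A B : Episode α} (h : Subep A B)
    (hcard : A.nodes.card = B.nodes.card) :
    ∀ s, Covers s B → Covers s A := by
  obtain ⟨U, hU, hUcard, himp⟩ := h
  have hUeq : U = B.nodes := Finset.eq_of_subset_of_card_le hU (by rw [hUcard, hcard])
  subst hUeq
  intro s hs
  exact himp s ((aux_covers_restrict_self B s).mpr hs)

private lemma aux_subep_of_imp {A B : Episode α} (hcard : A.nodes.card = B.nodes.card)
    (h : ∀ s, Covers s B → Covers s A) : Subep A B :=
  ⟨B.nodes, Finset.Subset.refl _, hcard.symm,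
    fun s hs => h s ((aux_covers_restrict_self B s).mp hs)⟩

private noncomputable def auxEdgeFinset (A : Episode α) : Finset (ℕ × ℕ) :=
  (A.nodes ×ˢ A.nodes).filter (fun p => A.edge p.1 p.2)

private lemma aux_edge_card {A B : Episode α}
    (φ : {v // v ∈ A.nodes} → {v // v ∈ B.nodes})
    (hφb : Function.Bijective φ)
    (hedge : ∀ u v, A.edge u.1 v.1 → B.edge (φ u).1 (φ v).1) :
    (auxEdgeFinset A).card ≤ (auxEdgeFinset B).card ∧
    ((auxEdgeFinset A).card = (auxEdgeFinset B).card →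
      ∀ x y, B.edge x y →
        ∃ u v : {v // v ∈ A.nodes}, A.edge u.1 v.1 ∧ (φ u).1 = x ∧ (φ v).1 = y) := by
  classical
  set F : ℕ × ℕ → ℕ × ℕ := fun p =>
    if h : p.1 ∈ A.nodes ∧ p.2 ∈ A.nodes then ((φ ⟨p.1, h.1⟩).1, (φ ⟨p.2, h.2⟩).1)
    else p with hF
  have hmaps : ∀ p ∈ auxEdgeFinset A, F p ∈ auxEdgeFinset B := by
    intro p hp
    simp only [auxEdgeFinset, Finset.mem_filter, Finset.mem_product] at hp
    obtain ⟨⟨h1, h2⟩, h3⟩ := hp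
    rw [hF]
    simp only [dif_pos (And.intro h1 h2)]
    simp only [auxEdgeFinset, Finset.mem_filter, Finset.mem_product]
    exact ⟨⟨(φ ⟨p.1, h1⟩).2, (φ ⟨p.2, h2⟩).2⟩, hedge _ _ h3⟩
  have hinj : Set.InjOn F (auxEdgeFinset A) := by
    intro p hp q hq hpq
    simp only [auxEdgeFinset, Finset.coe_filter, Set.mem_setOf_eq,
      Finset.mem_product] at hp hq
    obtain ⟨⟨hp1, hp2⟩, -⟩ := hp
    obtain ⟨⟨hq1, hq2⟩, -⟩ := hq
    rw [hF] at hpq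
    simp only [dif_pos (And.intro hp1 hp2), dif_pos (And.intro hq1 hq2)] at hpq
    have e1 : φ ⟨p.1, hp1⟩ = φ ⟨q.1, hq1⟩ := Subtype.ext (congrArg Prod.fst hpq)
    have e2 : φ ⟨p.2, hp2⟩ = φ ⟨q.2, hq2⟩ := Subtype.ext (congrArg Prod.snd hpq)
    exact Prod.ext (congrArg Subtype.val (hφb.1 e1)) (congrArg Subtype.val (hφb.1 e2))
  refine ⟨Finset.card_le_card_of_injOn F hmaps hinj, ?_⟩
  intro hEq x y hxy
  have hximg : ((auxEdgeFinset A).image F) = auxEdgeFinset B := by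
    apply Finset.eq_of_subset_of_card_le
    · intro q hq
      obtain ⟨p, hp, rfl⟩ := Finset.mem_image.mp hq
      exact hmaps p hp
    · rw [Finset.card_image_of_injOn hinj, hEq]
  have hxyB : (x, y) ∈ auxEdgeFinset B := by
    simp only [auxEdgeFinset, Finset.mem_filter, Finset.mem_product]
    exact ⟨⟨(B.edge_mem hxy).1, (B.edge_mem hxy).2⟩, hxy⟩
  rw [← hximg] at hxyB
  obtain ⟨p, hp, hFp⟩ := Finset.mem_image.mp hxyB
  simp only [auxEdgeFinset, Finset.mem_filter, Finset.mem_product] at hp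
  obtain ⟨⟨h1, h2⟩, h3⟩ := hp
  rw [hF] at hFp
  simp only [dif_pos (And.intro h1 h2)] at hFp
  exact ⟨⟨p.1, h1⟩, ⟨p.2, h2⟩, h3, congrArg Prod.fst hFp, congrArg Prod.snd hFp⟩

private lemma aux_covers_transfer {A B : Episode α}
    (φ : {v // v ∈ A.nodes} → {v // v ∈ B.nodes})
    (hφb : Function.Bijective φ) (hφl : ∀ v, B.lab (φ v).1 = A.lab v.1)
    (hsurj : ∀ x y, B.edge x y →
      ∃ u v : {v // v ∈ A.nodes}, A.edge u.1 v.1 ∧ (φ u).1 = x ∧ (φ v).1 = y) :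
    ∀ s, Covers s A → Covers s B := by
  rintro s ⟨f, hfi, hfl, hfe⟩
  set ψ : {v // v ∈ B.nodes} → {v // v ∈ A.nodes} :=
    fun w => (Equiv.ofBijective φ hφb).symm w with hψ
  have hψφ : ∀ u, ψ (φ u) = u := fun u => (Equiv.ofBijective φ hφb).symm_apply_apply u
  have hφψ : ∀ w, φ (ψ w) = w := fun w => (Equiv.ofBijective φ hφb).apply_symm_apply w
  refine ⟨fun w => f (ψ w), ?_, ?_, ?_⟩
  · exact hfi.comp (Equiv.ofBijective φ hφb).symm.injective
  · intro w
    rw [hfl (ψ w), ← hφl (ψ w)]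
    exact congrArg B.lab (congrArg Subtype.val (hφψ w))
  · intro w1 w2 hw
    obtain ⟨u, v, he, h1, h2⟩ := hsurj w1.1 w2.1 hw
    have p1 : ψ w1 = u := by rw [← Subtype.ext h1, hψφ]
    have p2 : ψ w2 = v := by rw [← Subtype.ext h2, hψφ]
    simp only [p1, p2]
    exact hfe u v he

end AuxStmt15

end Episode
open Episode in
/-- If `e` is a proper skeleton edge of `G ∈ 𝒮` and `H = G − e` (which lies in
`𝒮`), then there is no episode `H₁ ∈ 𝒮` with `H ≺ H₁ ≺ G`. -/
theorem stmt15 {α : Type*} (G : Episode α) (hG : inS G) (e : ℕ × ℕ)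
    (he : IsProperSkeletonEdge G e) :
    inS (G.eraseEdge e) ∧
    ¬ ∃ H₁ : Episode α, inS H₁ ∧
      ProperSubep (G.eraseEdge e) H₁ ∧ ProperSubep H₁ G := by
  classical
  have hH : inS (G.eraseEdge e) := aux_inS_erase hG he
  refine ⟨hH, ?_⟩
  rintro ⟨H₁, hH₁, ⟨hsub₁, hnsub₁⟩, ⟨hsub₂, hnsub₂⟩⟩
  have hc1 : (G.eraseEdge e).nodes.card ≤ H₁.nodes.card := aux_card_le_of_subep hsub₁
  have hc2 : H₁.nodes.card ≤ G.nodes.card := aux_card_le_of_subep hsub₂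
  have hcardHG : (G.eraseEdge e).nodes.card = G.nodes.card := rfl
  have hcard1 : (G.eraseEdge e).nodes.card = H₁.nodes.card := le_antisymm hc1 (by omega)
  have hcard2 : H₁.nodes.card = G.nodes.card := by omega
  have himp1 : ∀ s, Covers s H₁ → Covers s (G.eraseEdge e) := aux_imp_of_subep hsub₁ hcard1
  have himp2 : ∀ s, Covers s G → Covers s H₁ := aux_imp_of_subep hsub₂ hcard2
  obtain ⟨φ₁, hb₁, hl₁, he₁⟩ := aux_embed hH hH₁ hcard1 himp1
  obtain ⟨φ₂, hb₂, hl₂, he₂⟩ := aux_embed hH₁ hG hcard2 himp2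
  have hA1 := aux_edge_card φ₁ hb₁ he₁
  have hA2 := aux_edge_card φ₂ hb₂ he₂
  have heF : e ∈ auxEdgeFinset G := by
    simp only [auxEdgeFinset, Finset.mem_filter, Finset.mem_product]
    exact ⟨⟨(G.edge_mem he.1.1).1, (G.edge_mem he.1.1).2⟩, he.1.1⟩
  have hEH : auxEdgeFinset (G.eraseEdge e) = (auxEdgeFinset G).erase e := by
    ext p
    simp only [auxEdgeFinset, Finset.mem_erase, Finset.mem_filter,
      Finset.mem_product]
    simp only [eraseEdge]
    constructor
    · rintro ⟨hm, hE, hne⟩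
      exact ⟨by rwa [Prod.mk.eta] at hne, hm, hE⟩
    · rintro ⟨hne, hm, hE⟩
      exact ⟨hm, hE, by rwa [Prod.mk.eta]⟩
  have hEG : (auxEdgeFinset G).card = (auxEdgeFinset (G.eraseEdge e)).card + 1 := by
    have hpos : 0 < (auxEdgeFinset G).card := Finset.card_pos.mpr ⟨e, heF⟩
    rw [hEH, Finset.card_erase_of_mem heF]
    omega
  rcases Nat.lt_or_ge (auxEdgeFinset H₁).card (auxEdgeFinset G).card with hlt | hge
  · have hEq : (auxEdgeFinset (G.eraseEdge e)).card = (auxEdgeFinset H₁).card := by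
      have := hA1.1
      have := hA2.1
      omega
    have hsurj := hA1.2 hEq
    have himp := aux_covers_transfer φ₁ hb₁ hl₁ hsurj
    exact hnsub₁ (aux_subep_of_imp hcard1.symm himp)
  · have hEq : (auxEdgeFinset H₁).card = (auxEdgeFinset G).card := le_antisymm hA2.1 hge
    have hsurj := hA2.2 hEq
    have himp := aux_covers_transfer φ₂ hb₂ hl₂ hsurj
    exact hnsub₂ (aux_subep_of_imp hcard2.symm himp)
end
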